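/- arXiv:1702.05534 — 6 statements merged into one kernel-verified Lean document; each statement's English description precedes it below -/
import Mathlib

section
/- Let a, b ∈ ℂ with a+b not zero or a negative integer, and let z : ℕ≥1 → ℂ be a sequence of nonzero complex numbers such that (k ↦ 1/z_k²) is summable and, for every t ∈ ℂ, the infinite product ∏_{k≥1} (1 + t²/z_k²) converges with value ∑_{n≥0} (−1)^n (a)_n (b)_n / (n! (a+b)_n (a+b)_{2n}) · t^{2n}. Then for every n ≥ 0, the multiple zeta value ζ_z({2}^n) := ∑_{k₁>k₂>⋯>k_n≥1} ∏_{i=1}^n 1/z_{k_i}² equals (−1)^n (a)_n (b)_n / (n! (a+b)_n (a+b)_{2n}). -/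
open Filter Topology

/-! ### Auxiliary lemmas -/

lemma hmzv_summable_prod_subsets (x : ℕ → ℂ) (hx : Summable x) :
    Summable (fun S : Finset ℕ => ∏ k ∈ S, x k) := by
  rw [← summable_norm_iff]
  have hxn : Summable (fun k => ‖x k‖) := hx.norm
  have key : ∀ u : Finset (Finset ℕ),
      ∑ S ∈ u, ‖∏ k ∈ S, x k‖ ≤ Real.exp (∑' k, ‖x k‖) := by
    intro u
    set F := u.sup id with hF
    have husub : u ⊆ F.powerset := by
      intro S hS
      exact Finset.mem_powerset.2 (Finset.le_sup (f := id) hS)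
    calc ∑ S ∈ u, ‖∏ k ∈ S, x k‖ = ∑ S ∈ u, ∏ k ∈ S, ‖x k‖ := by
          simp [norm_prod]
      _ ≤ ∑ S ∈ F.powerset, ∏ k ∈ S, ‖x k‖ := by
          refine Finset.sum_le_sum_of_subset_of_nonneg husub ?_
          intro S _ _
          exact Finset.prod_nonneg fun k _ => norm_nonneg _
      _ = ∏ k ∈ F, (‖x k‖ + 1) := by rw [Finset.prod_add]; simp
      _ ≤ ∏ k ∈ F, Real.exp ‖x k‖ := by
          refine Finset.prod_le_prod (fun k _ => by positivity) (fun k _ => ?_)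
          exact Real.add_one_le_exp _
      _ = Real.exp (∑ k ∈ F, ‖x k‖) := (Real.exp_sum _ _).symm
      _ ≤ Real.exp (∑' k, ‖x k‖) := by
          apply Real.exp_le_exp.2
          exact Summable.sum_le_tsum F (fun k _ => norm_nonneg _) hxn
  exact summable_of_sum_le (fun S => norm_nonneg _) key

lemma hmzv_hasProd_one_add (x : ℕ → ℂ) (hx : Summable x) :
    HasProd (fun k => 1 + x k) (∑' S : Finset ℕ, ∏ k ∈ S, x k) := by
  have hs := hmzv_summable_prod_subsets x hx
  have hS := hs.hasSum
  have hmap : Tendsto (fun F : Finset ℕ => Finset.powerset F) atTop atTop := by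
    apply Filter.tendsto_atTop_atTop.2
    intro u
    refine ⟨u.sup id, fun F hF => ?_⟩
    intro S hS'
    exact Finset.mem_powerset.2 ((Finset.le_sup (f := id) hS').trans hF)
  have h2 := hS.comp hmap
  rw [HasProd]
  convert h2 using 1
  funext F
  show ∏ k ∈ F, (1 + x k) = ∑ S ∈ F.powerset, ∏ k ∈ S, x k
  simp only [add_comm (1 : ℂ)]
  rw [Finset.prod_add]
  simp
  rfl

section Grouping
variable {α : Type*} [AddCommGroup α] [UniformSpace α] [IsUniformAddGroup α]
  [CompleteSpace α] [T0Space α]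

omit [T0Space α] in
lemma hmzv_summable_group_by_card (G : Finset ℕ → α) (hG : Summable G) :
    Summable (fun n : ℕ => ∑' S : {S : Finset ℕ // S.card = n}, G S.1) := by
  have hGe : Summable (G ∘ (Equiv.sigmaFiberEquiv (Finset.card : Finset ℕ → ℕ))) :=
    (Equiv.summable_iff _).2 hG
  exact hGe.sigma

lemma hmzv_tsum_group_by_card (G : Finset ℕ → α) (hG : Summable G) :
    ∑' S : Finset ℕ, G S = ∑' (n : ℕ) (S : {S : Finset ℕ // S.card = n}), G S.1 := by
  have hGe : Summable (G ∘ (Equiv.sigmaFiberEquiv (Finset.card : Finset ℕ → ℕ))) :=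
    (Equiv.summable_iff _).2 hG
  rw [← (Equiv.sigmaFiberEquiv (Finset.card : Finset ℕ → ℕ)).tsum_eq G]
  exact Summable.tsum_sigma hGe

end Grouping

/-- Equivalence between strictly antitone tuples and finsets of given cardinality. -/
noncomputable def hmzvAntitoneEquiv (n : ℕ) :
    {f : Fin n → ℕ // StrictAnti f} ≃ {S : Finset ℕ // S.card = n} where
  toFun f := ⟨Finset.image f.1 Finset.univ, by
    rw [Finset.card_image_of_injective _ f.2.injective, Finset.card_univ, Fintype.card_fin]⟩
  invFun S := ⟨fun i => S.1.orderEmbOfFin S.2 i.rev, by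
    intro i j hij
    exact (S.1.orderEmbOfFin S.2).strictMono (Fin.rev_lt_rev.2 hij)⟩
  left_inv := by
    rintro ⟨f, hf⟩
    ext i
    simp only
    have hg : StrictMono (fun j : Fin n => f j.rev) := by
      intro i j hij
      exact hf (Fin.rev_lt_rev.2 hij)
    have hmem : ∀ j : Fin n, f j.rev ∈ Finset.image f Finset.univ := by
      intro j; exact Finset.mem_image_of_mem f (Finset.mem_univ _)
    have := Finset.orderEmbOfFin_unique
      (s := Finset.image f Finset.univ)
      (by rw [Finset.card_image_of_injective _ hf.injective, Finset.card_univ, Fintype.card_fin])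
      hmem hg
    calc (Finset.image f Finset.univ).orderEmbOfFin _ i.rev
        = f i.rev.rev := by rw [← this]
      _ = f i := by rw [Fin.rev_rev]
  right_inv := by
    rintro ⟨S, hS⟩
    ext1
    simp only
    apply Finset.coe_injective
    rw [Finset.coe_image, Finset.coe_univ, Set.image_univ]
    have : Set.range (fun i : Fin n => S.orderEmbOfFin hS i.rev)
        = Set.range (S.orderEmbOfFin hS) := by
      exact Fin.rev_surjective.range_comp _
    rw [this, Finset.range_orderEmbOfFin]

lemma hmzv_norm_coeff_pow (c : ℂ) (t : ℝ) (ht : 0 < t) (k : ℕ) :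
    ‖c * (t : ℂ) ^ k‖ = ‖c‖ * t ^ k := by
  rw [norm_mul, norm_pow, Complex.norm_real, Real.norm_eq_abs, abs_of_pos ht]

lemma hmzv_shift_summable (d : ℕ → ℂ) (t : ℝ) (ht : 0 < t)
    (h : Summable (fun k => ‖d k‖ * t ^ k)) (m : ℕ) :
    Summable (fun k => ‖d (k + m)‖ * t ^ k) := by
  have h1 : Summable (fun k => ‖d (k + m)‖ * t ^ (k + m)) :=
    (summable_nat_add_iff m).2 h
  have h2 := h1.mul_right ((t ^ m)⁻¹)
  refine h2.congr fun k => ?_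
  field_simp [pow_add, ht.ne']
  ring

/-- Uniqueness of everywhere-absolutely-convergent power series vanishing on `(0, ρ]`. -/
lemma hmzv_coeff_zero_of_tsum_zero (d : ℕ → ℂ) (ρ : ℝ) (hρ : 0 < ρ)
    (hs : ∀ t : ℝ, 0 < t → t ≤ ρ → Summable (fun n => ‖d n‖ * t ^ n))
    (h0 : ∀ t : ℝ, 0 < t → t ≤ ρ → ∑' n, d n * (t : ℂ) ^ n = 0) :
    ∀ n, d n = 0 := by
  intro n
  induction n using Nat.strong_induction_on with
  | _ n ih =>
  set ρ' : ℝ := min ρ 1 with hρ'def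
  have hρ'0 : 0 < ρ' := lt_min hρ one_pos
  have hρ'ρ : ρ' ≤ ρ := min_le_left _ _
  have hsC : ∀ t : ℝ, 0 < t → t ≤ ρ → Summable (fun k => d k * (t : ℂ) ^ k) := by
    intro t ht htρ
    rw [← summable_norm_iff]
    exact ((hs t ht htρ).congr fun k => (hmzv_norm_coeff_pow _ t ht k).symm)
  set M : ℝ := ∑' k, ‖d (k + 1 + n)‖ * ρ' ^ k with hMdef
  have hshiftρ' : Summable (fun k => ‖d (k + 1 + n)‖ * ρ' ^ k) := by
    refine (hmzv_shift_summable d ρ' hρ'0 (hs ρ' hρ'0 hρ'ρ) (n + 1)).congr fun k => ?_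
    rw [show k + (n + 1) = k + 1 + n from by omega]
  have hM0 : 0 ≤ M := tsum_nonneg fun k => by positivity
  have key : ∀ t : ℝ, 0 < t → t ≤ ρ' → ‖d n‖ ≤ t * M := by
    intro t ht htρ'
    have htρ : t ≤ ρ := htρ'.trans hρ'ρ
    have hsumt := hsC t ht htρ
    have h1 : ∑' k, d (k + n) * (t : ℂ) ^ (k + n) = 0 := by
      have hA := Summable.sum_add_tsum_nat_add (f := fun k => d k * (t : ℂ) ^ k) n hsumt
      have hzero : ∑ i ∈ Finset.range n, d i * (t : ℂ) ^ i = 0 := by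
        apply Finset.sum_eq_zero
        intro i hi
        rw [ih i (Finset.mem_range.1 hi), zero_mul]
      rw [hzero, zero_add] at hA
      rw [hA, h0 t ht htρ]
    have hshiftn : Summable (fun k => ‖d (k + n)‖ * t ^ k) :=
      hmzv_shift_summable d t ht (hs t ht htρ) n
    have hshift : Summable (fun k => d (k + n) * (t : ℂ) ^ k) := by
      rw [← summable_norm_iff]
      exact hshiftn.congr fun k => (hmzv_norm_coeff_pow _ t ht k).symm
    have h2 : ∑' k, d (k + n) * (t : ℂ) ^ k = 0 := by
      have heq : ∀ k, d (k + n) * (t : ℂ) ^ (k + n)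
          = (t : ℂ) ^ n * (d (k + n) * (t : ℂ) ^ k) := by
        intro k; rw [pow_add]; ring
      rw [tsum_congr heq, tsum_mul_left] at h1
      rcases mul_eq_zero.1 h1 with h | h
      · exact absurd h (pow_ne_zero n (by exact_mod_cast ht.ne'))
      · exact h
    have h3 : d n = -∑' k, d (k + 1 + n) * (t : ℂ) ^ (k + 1) := by
      have h4 := Summable.tsum_eq_zero_add hshift
      rw [h2] at h4
      simp only [zero_add, pow_zero, mul_one] at h4
      linear_combination -h4
    have hsum1 : Summable (fun k => ‖d (k + 1 + n)‖ * t ^ (k + 1)) := by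
      have := (hmzv_shift_summable d t ht (hs t ht htρ) (n + 1)).mul_right t
      refine this.congr fun k => ?_
      rw [show k + (n + 1) = k + 1 + n from by omega, pow_succ]
      ring
    have hbound : ‖d n‖ ≤ ∑' k, ‖d (k + 1 + n)‖ * t ^ (k + 1) := by
      rw [h3, norm_neg]
      refine (norm_tsum_le_tsum_norm ?_).trans_eq
        (tsum_congr fun k => hmzv_norm_coeff_pow _ t ht _)
      exact hsum1.congr fun k => (hmzv_norm_coeff_pow _ t ht _).symm
    refine hbound.trans ?_
    have hle : ∀ k, ‖d (k + 1 + n)‖ * t ^ (k + 1) ≤ t * (‖d (k + 1 + n)‖ * ρ' ^ k) := by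
      intro k
      rw [pow_succ]
      have htk : t ^ k ≤ ρ' ^ k := pow_le_pow_left₀ ht.le htρ' k
      calc ‖d (k + 1 + n)‖ * (t ^ k * t) = t * (‖d (k + 1 + n)‖ * t ^ k) := by ring
        _ ≤ t * (‖d (k + 1 + n)‖ * ρ' ^ k) := by
            apply mul_le_mul_of_nonneg_left _ ht.le
            exact mul_le_mul_of_nonneg_left htk (norm_nonneg _)
    calc ∑' k, ‖d (k + 1 + n)‖ * t ^ (k + 1)
        ≤ ∑' k, t * (‖d (k + 1 + n)‖ * ρ' ^ k) :=
          Summable.tsum_le_tsum hle hsum1 (hshiftρ'.mul_left t)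
      _ = t * M := tsum_mul_left
  have hdn : ‖d n‖ ≤ 0 := by
    refine le_of_forall_pos_le_add fun ε hε => ?_
    rw [zero_add]
    have hM1 : (0 : ℝ) < M + 1 := by linarith
    set t : ℝ := min ρ' (ε / (M + 1)) with htdef
    have ht0 : 0 < t := lt_min hρ'0 (by positivity)
    refine (key t ht0 (min_le_left _ _)).trans ?_
    calc t * M ≤ (ε / (M + 1)) * M := mul_le_mul_of_nonneg_right (min_le_right _ _) hM0
      _ ≤ ε := by rw [div_mul_eq_mul_div, div_le_iff₀ hM1]; nlinarith
  simpa using le_antisymm hdn (norm_nonneg _)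

/-- The key identity: the grouped-by-cardinality expansion of the product equals the series. -/
lemma hmzv_key_identity (w : ℕ → ℂ) (hw : Summable w) (c : ℕ → ℂ)
    (hprod : ∀ t : ℂ, HasProd (fun k => 1 + t ^ 2 * w k) (∑' n, c n * t ^ (2 * n)))
    (t : ℂ) :
    ∑' n : ℕ, (t ^ 2) ^ n * (∑' S : {S : Finset ℕ // S.card = n}, ∏ k ∈ S.1, w k)
      = ∑' n : ℕ, c n * t ^ (2 * n) := by
  set x : ℕ → ℂ := fun k => t ^ 2 * w k with hxdef
  have hx : Summable x := hw.mul_left _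
  have h2 := (hmzv_hasProd_one_add x hx).unique (hprod t)
  rw [← h2, hmzv_tsum_group_by_card _ (hmzv_summable_prod_subsets x hx)]
  refine tsum_congr fun n => Eq.symm ?_
  calc ∑' S : {S : Finset ℕ // S.card = n}, ∏ k ∈ S.1, x k
      = ∑' S : {S : Finset ℕ // S.card = n}, (t ^ 2) ^ n * ∏ k ∈ S.1, w k := by
        refine tsum_congr fun S => ?_
        rw [hxdef]
        simp only
        rw [Finset.prod_mul_distrib, Finset.prod_const, S.2]
    _ = (t ^ 2) ^ n * ∑' S : {S : Finset ℕ // S.card = n}, ∏ k ∈ S.1, w k := tsum_mul_left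

/-- Norm summability of the grouped coefficients against any geometric weight. -/
lemma hmzv_summable_norm_E (w : ℕ → ℂ) (hw : Summable w) (t : ℂ) :
    Summable (fun n : ℕ =>
      ‖∑' S : {S : Finset ℕ // S.card = n}, ∏ k ∈ S.1, w k‖ * ‖t ^ 2‖ ^ n) := by
  set x : ℕ → ℂ := fun k => t ^ 2 * w k with hxdef
  have hx := hmzv_summable_prod_subsets x (hw.mul_left _)
  have hxn : Summable (fun S : Finset ℕ => ‖∏ k ∈ S, x k‖) := summable_norm_iff.mpr hx
  have hgroup : Summable (fun n : ℕ => ∑' S : {S : Finset ℕ // S.card = n}, ‖∏ k ∈ S.1, x k‖) :=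
    hmzv_summable_group_by_card (fun S => ‖∏ k ∈ S, x k‖) hxn
  refine hgroup.of_nonneg_of_le (fun n => by positivity) (fun n => ?_)
  have hfib : Summable (fun S : {S : Finset ℕ // S.card = n} => ‖∏ k ∈ S.1, w k‖) :=
    (summable_norm_iff.mpr (hmzv_summable_prod_subsets w hw)).comp_injective Subtype.val_injective
  calc ‖∑' S : {S : Finset ℕ // S.card = n}, ∏ k ∈ S.1, w k‖ * ‖t ^ 2‖ ^ n
      ≤ (∑' S : {S : Finset ℕ // S.card = n}, ‖∏ k ∈ S.1, w k‖) * ‖t ^ 2‖ ^ n := by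
        exact mul_le_mul_of_nonneg_right (norm_tsum_le_tsum_norm hfib) (by positivity)
    _ = ∑' S : {S : Finset ℕ // S.card = n}, ‖∏ k ∈ S.1, w k‖ * ‖t ^ 2‖ ^ n := tsum_mul_right.symm
    _ = ∑' S : {S : Finset ℕ // S.card = n}, ‖∏ k ∈ S.1, x k‖ := by
        refine tsum_congr fun S => ?_
        rw [hxdef]
        simp only
        rw [Finset.prod_mul_distrib, Finset.prod_const, S.2, norm_mul, norm_pow (t^2) n, mul_comm]

lemma hmzv_mzv_eq_E (w : ℕ → ℂ) (n : ℕ) :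
    (∑' f : {f : Fin n → ℕ // StrictAnti f}, ∏ i, w (f.1 i))
      = ∑' S : {S : Finset ℕ // S.card = n}, ∏ k ∈ S.1, w k := by
  rw [← (hmzvAntitoneEquiv n).tsum_eq (fun S : {S : Finset ℕ // S.card = n} => ∏ k ∈ S.1, w k)]
  refine tsum_congr fun f => ?_
  show ∏ i, w (f.1 i) = ∏ k ∈ Finset.image f.1 Finset.univ, w k
  exact (Finset.prod_image (fun i _ j _ h => f.2.injective h)).symm

lemma hmzv_E_zero (w : ℕ → ℂ) :
    (∑' S : {S : Finset ℕ // S.card = 0}, ∏ k ∈ S.1, w k) = 1 := by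
  rw [tsum_eq_single (⟨∅, Finset.card_empty⟩ : {S : Finset ℕ // S.card = 0})]
  · simp
  · intro S hS
    exact absurd (Subtype.ext (Finset.card_eq_zero.1 S.2)) hS

/-- The Pochhammer symbol `(x)_n = x(x+1)⋯(x+n-1)` over `ℂ`. -/
noncomputable def poch (x : ℂ) (n : ℕ) : ℂ := (ascPochhammer ℂ n).eval x

/-- The multiple zeta value `ζ_z({s}^n) = ∑_{k₁ > ⋯ > k_n} ∏ᵢ 1/z_{kᵢ}^s`. -/
noncomputable def mzv (z : ℕ → ℂ) (s n : ℕ) : ℂ :=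
  ∑' f : {f : Fin n → ℕ // StrictAnti f}, ∏ i, 1 / (z (f.1 i)) ^ s

/-- Evaluation of the hypergeometric multiple zeta values `ζ_{a,b}({2}^n)`. -/
theorem hypergeometric_mzv_two (a b : ℂ) (hab : ∀ k : ℕ, a + b + (k : ℂ) ≠ 0)
    (z : ℕ → ℂ) (hz : ∀ k, z k ≠ 0)
    (hsum : Summable (fun k => 1 / (z k) ^ 2))
    (hprod : ∀ t : ℂ, HasProd (fun k => 1 + t ^ 2 / (z k) ^ 2)
      (∑' n : ℕ, (-1 : ℂ) ^ n * (poch a n * poch b n) /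
        ((Nat.factorial n : ℂ) * poch (a + b) n * poch (a + b) (2 * n)) * t ^ (2 * n)))
    (n : ℕ) :
    mzv z 2 n = (-1 : ℂ) ^ n * (poch a n * poch b n) /
      ((Nat.factorial n : ℂ) * poch (a + b) n * poch (a + b) (2 * n)) := by
  classical
  set w : ℕ → ℂ := fun k => 1 / z k ^ 2 with hwdef
  set c : ℕ → ℂ := fun m => (-1 : ℂ) ^ m * (poch a m * poch b m) /
      ((Nat.factorial m : ℂ) * poch (a + b) m * poch (a + b) (2 * m)) with hcdef
  set E : ℕ → ℂ := fun m => ∑' S : {S : Finset ℕ // S.card = m}, ∏ k ∈ S.1, w k with hEdef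
  have hw : Summable w := hsum
  have hprod' : ∀ t : ℂ, HasProd (fun k => 1 + t ^ 2 * w k) (∑' m, c m * t ^ (2 * m)) := by
    intro t
    have h := hprod t
    have hfun : (fun k => 1 + t ^ 2 / z k ^ 2) = fun k => 1 + t ^ 2 * w k := by
      funext k
      rw [hwdef]
      simp [mul_one_div, div_eq_mul_inv]
    rw [hfun] at h
    exact h
  have hkey : ∀ t : ℂ, ∑' m, (t ^ 2) ^ m * E m = ∑' m, c m * t ^ (2 * m) := by
    intro t
    have h := hmzv_key_identity w hw c hprod' t
    rw [hEdef]
    exact h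
  have hsqC : ∀ s : ℝ, 0 < s → (((Real.sqrt s : ℝ) : ℂ)) ^ 2 = (s : ℂ) := by
    intro s hs
    rw [← Complex.ofReal_pow, Real.sq_sqrt hs.le]
  have hEnorm : ∀ s : ℝ, 0 < s → Summable (fun m => ‖E m‖ * s ^ m) := by
    intro s hs
    have h := hmzv_summable_norm_E w hw ((Real.sqrt s : ℝ) : ℂ)
    rw [hsqC s hs] at h
    refine h.congr fun m => ?_
    rw [hEdef]
    simp only
    rw [Complex.norm_real, Real.norm_eq_abs, abs_of_pos hs]
  have hsummE : ∀ s : ℝ, 0 < s → Summable (fun m => E m * (s : ℂ) ^ m) := by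
    intro s hs
    rw [← summable_norm_iff]
    exact (hEnorm s hs).congr fun m => (hmzv_norm_coeff_pow _ s hs m).symm
  have hkey' : ∀ s : ℝ, 0 < s →
      ∑' m, E m * (s : ℂ) ^ m = ∑' m, c m * (s : ℂ) ^ m := by
    intro s hs
    have hk := hkey ((Real.sqrt s : ℝ) : ℂ)
    simp only [pow_mul] at hk
    rw [hsqC s hs] at hk
    calc ∑' m, E m * (s : ℂ) ^ m = ∑' m, (s : ℂ) ^ m * E m := tsum_congr fun m => mul_comm _ _
      _ = ∑' m, c m * (s : ℂ) ^ m := hk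
  have hmain : ∀ m, E m = c m := by
    by_cases H : ∃ t₀ : ℂ, t₀ ≠ 0 ∧ Summable (fun m => c m * t₀ ^ (2 * m))
    · obtain ⟨t₀, ht₀, hsum₀⟩ := H
      set r : ℝ := ‖t₀‖ ^ 2 with hrdef
      have hr : 0 < r := pow_pos (norm_pos_iff.2 ht₀) 2
      obtain ⟨B, hB⟩ : ∃ B : ℝ, ∀ m, ‖c m * t₀ ^ (2 * m)‖ ≤ B := by
        obtain ⟨B, hB⟩ := (hsum₀.tendsto_atTop_zero.norm.bddAbove_range)
        exact ⟨B, fun m => hB (Set.mem_range_self m)⟩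
      have hB0 : 0 ≤ B := (norm_nonneg _).trans (hB 0)
      have hcs : ∀ s : ℝ, 0 < s → s ≤ r / 2 → Summable (fun m => ‖c m‖ * s ^ m) := by
        intro s hs hsr
        have hq0 : 0 ≤ s / r := by positivity
        have hq : s / r ≤ 1 / 2 := by
          rw [div_le_div_iff₀ hr two_pos]
          linarith
        have hgeo : Summable (fun m : ℕ => B * (1 / 2 : ℝ) ^ m) :=
          (summable_geometric_of_lt_one (by norm_num) (by norm_num)).mul_left B
        refine hgeo.of_nonneg_of_le (fun m => by positivity) (fun m => ?_)
        have h1 : ‖c m‖ * s ^ m = ‖c m * t₀ ^ (2 * m)‖ * (s / r) ^ m := by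
          rw [norm_mul, norm_pow, pow_mul, ← hrdef, mul_assoc, ← mul_pow,
            mul_div_cancel₀ _ hr.ne']
        rw [h1]
        exact mul_le_mul (hB m) (pow_le_pow_left₀ hq0 hq m) (by positivity) hB0
      have hs1 : ∀ s : ℝ, 0 < s → s ≤ r / 2 →
          Summable (fun m => ‖E m - c m‖ * s ^ m) := by
        intro s hs hsρ
        refine Summable.of_nonneg_of_le (fun m => by positivity) (fun m => ?_)
          ((hEnorm s hs).add (hcs s hs hsρ))
        calc ‖E m - c m‖ * s ^ m ≤ (‖E m‖ + ‖c m‖) * s ^ m :=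
              mul_le_mul_of_nonneg_right (norm_sub_le _ _) (by positivity)
          _ = ‖E m‖ * s ^ m + ‖c m‖ * s ^ m := by ring
      have h01 : ∀ s : ℝ, 0 < s → s ≤ r / 2 →
          ∑' m, (E m - c m) * (s : ℂ) ^ m = 0 := by
        intro s hs hsρ
        have hcsum : Summable (fun m => c m * (s : ℂ) ^ m) := by
          rw [← summable_norm_iff]
          exact (hcs s hs hsρ).congr fun m => (hmzv_norm_coeff_pow _ s hs m).symm
        rw [tsum_congr (fun m => sub_mul (E m) (c m) ((s : ℂ) ^ m)),
          Summable.tsum_sub (hsummE s hs) hcsum, hkey' s hs, sub_self]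
      have hzero := hmzv_coeff_zero_of_tsum_zero (fun m => E m - c m) (r / 2)
        (by linarith) hs1 h01
      intro m
      exact sub_eq_zero.1 (hzero m)
    · push_neg at H
      exfalso
      have h01 : ∀ s : ℝ, 0 < s → s ≤ 1 → ∑' m, E m * (s : ℂ) ^ m = 0 := by
        intro s hs _
        have ht0 : ((Real.sqrt s : ℝ) : ℂ) ≠ 0 := by
          simpa using (Real.sqrt_pos.2 hs).ne'
        have hC : ∑' m, c m * ((Real.sqrt s : ℝ) : ℂ) ^ (2 * m) = 0 :=
          tsum_eq_zero_of_not_summable (H _ ht0)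
        calc ∑' m, E m * (s : ℂ) ^ m = ∑' m, (s : ℂ) ^ m * E m :=
              tsum_congr fun m => mul_comm _ _
          _ = ∑' m, c m * ((Real.sqrt s : ℝ) : ℂ) ^ (2 * m) := by
              have hk := hkey ((Real.sqrt s : ℝ) : ℂ)
              rw [hsqC s hs] at hk
              exact hk
          _ = 0 := hC
      have hzero := hmzv_coeff_zero_of_tsum_zero E 1 one_pos
        (fun s hs _ => hEnorm s hs) h01
      have h1 : E 0 = 1 := by rw [hEdef]; exact hmzv_E_zero w
      rw [hzero 0] at h1
      exact one_ne_zero h1.symm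
  have hmzvE : mzv z 2 n = E n := by
    rw [hEdef]
    exact hmzv_mzv_eq_E w n
  rw [hmzvE, hmain n]
end

section
/- Let N ≥ 0 be an integer, x : Fin N → ℂ, and t, y ∈ ℂ with |t·x_i| < 1 and |(y+1)·t·x_i| < 1 for every i. For integers n ≥ k ≥ 1 define S*(n,k) := ∑ over weakly decreasing k-tuples of indices i₁ ≥ i₂ ≥ ⋯ ≥ i_k in Fin N and over k-tuples (a₁,…,a_k) of positive integers with a₁+⋯+a_k = n, of ∏_{j=1}^k x_{i_j}^{a_j}; set S*(0,0) = 1 and S*(n,0) = 0 for n ≥ 1. Then ∏_{i} (1 − t·x_i)/(1 − (y+1)·t·x_i) = ∑_{n=0}^∞ (∑_{k=0}^{n} S*(n,k)·y^k) · t^n, the series on the right converging absolutely. -/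
/-- `S*(n,k)`: the sum over weakly decreasing `k`-tuples of indices in `Fin N` and
compositions `(a₁,…,a_k)` of `n` into `k` positive parts of `∏_j x_{i_j}^{a_j}`.
In particular `S*(0,0) = 1` and `S*(n,0) = 0` for `n ≥ 1`. -/
noncomputable def SavgStar {N : ℕ} (x : Fin N → ℂ) (n k : ℕ) : ℂ :=
  ∑ a ∈ (Finset.Nat.antidiagonalTuple k n).filter (fun a => ∀ j, 0 < a j),
    ∑' f : {f : Fin k → Fin N // Antitone f}, ∏ j, x (f.1 j) ^ (a j)

open Finset

open scoped Classical

namespace HoffmanAux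

/-- The weight `w 0 = 1`, `w (m+1) = y (y+1)^m`. -/
noncomputable def wc (y : ℂ) : ℕ → ℂ
  | 0 => 1
  | (m + 1) => y * (y + 1) ^ m

lemma sum_wc (y : ℂ) (m : ℕ) : ∑ u ∈ range (m + 1), wc y u = (y + 1) ^ m := by
  induction m with
  | zero => simp [wc]
  | succ m ih => rw [Finset.sum_range_succ, ih]; show _ + y * _ = _; ring

lemma SavgStar_eq_sum {N : ℕ} (x : Fin N → ℂ) (n k : ℕ) :
    SavgStar x n k =
      ∑ a ∈ (Finset.Nat.antidiagonalTuple k n).filter (fun a => ∀ j, 0 < a j),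
        ∑ f ∈ Finset.univ.filter (fun f : Fin k → Fin N => Antitone f),
          ∏ j, x (f j) ^ (a j) := by
  unfold SavgStar
  refine Finset.sum_congr rfl fun a _ => ?_
  rw [tsum_fintype]
  exact (Finset.sum_subtype (Finset.univ.filter (fun f : Fin k → Fin N => Antitone f))
    (fun f => by simp) (fun f => ∏ j, x (f j) ^ (a j))).symm

lemma SavgStar_zero {N : ℕ} (x : Fin N → ℂ) (n : ℕ) :
    SavgStar x n 0 = if n = 0 then 1 else 0 := by
  have huniq : ∀ f : Fin 0 → Fin N, Antitone f := by
    intro f a b _; exact a.elim0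
  rw [SavgStar_eq_sum]
  cases n with
  | zero =>
    rw [Finset.Nat.antidiagonalTuple_zero_zero, Finset.filter_singleton,
      if_pos (fun j => j.elim0), Finset.sum_singleton,
      Finset.filter_true_of_mem (fun f _ => huniq f), if_pos rfl]
    simp [Fintype.card_fun]
  | succ n =>
    rw [Finset.Nat.antidiagonalTuple_zero_succ]
    simp

lemma SavgStar_eq_zero {N : ℕ} (x : Fin N → ℂ) {n k : ℕ} (h : n < k) :
    SavgStar x n k = 0 := by
  unfold SavgStar
  rw [Finset.filter_false_of_mem, Finset.sum_empty]
  intro a ha hpos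
  have hsum : ∑ j, a j = n := Finset.Nat.mem_antidiagonalTuple.mp ha
  have : k ≤ n := by
    calc k = ∑ _j : Fin k, 1 := by simp
    _ ≤ ∑ j, a j := Finset.sum_le_sum fun j _ => hpos j
    _ = n := hsum
  omega

lemma SavgStar_fin_zero (x : Fin 0 → ℂ) (n k : ℕ) :
    SavgStar x n k = if n = 0 ∧ k = 0 then 1 else 0 := by
  cases k with
  | zero => rw [SavgStar_zero]; by_cases h : n = 0 <;> simp [h]
  | succ k =>
    unfold SavgStar
    have : IsEmpty {f : Fin (k + 1) → Fin 0 // Antitone f} := by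
      constructor; rintro ⟨f, -⟩; exact (f 0).elim0
    simp [tsum_empty]

/-- Splitting a positive composition of `n` into `k+1` parts as first part plus a
positive composition of the rest. -/
lemma sum_P_succ {k n : ℕ} (H : (Fin (k + 1) → ℕ) → ℂ) :
    ∑ a ∈ (Finset.Nat.antidiagonalTuple (k + 1) n).filter (fun a => ∀ j, 0 < a j), H a
      = ∑ p ∈ (Finset.HasAntidiagonal.antidiagonal n).filter (fun p => 0 < p.1),
          ∑ b ∈ (Finset.Nat.antidiagonalTuple k p.2).filter (fun b => ∀ j, 0 < b j),
            H (Fin.cons p.1 b) := by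
  rw [Finset.sum_sigma']
  refine Finset.sum_nbij'
    (fun (a : Fin (k + 1) → ℕ) =>
      (⟨(a 0, ∑ j : Fin k, a j.succ), Fin.tail a⟩ : (_ : ℕ × ℕ) × (Fin k → ℕ)))
    (fun q => Fin.cons q.1.1 q.2) ?_ ?_ ?_ ?_ ?_
  · intro a ha
    rw [Finset.mem_filter, Finset.Nat.mem_antidiagonalTuple] at ha
    obtain ⟨hsum, hpos⟩ := ha
    refine Finset.mem_sigma.mpr ⟨?_, ?_⟩
    · rw [Finset.mem_filter, Finset.HasAntidiagonal.mem_antidiagonal]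
      exact ⟨by rw [← hsum, Fin.sum_univ_succ], hpos 0⟩
    · rw [Finset.mem_filter, Finset.Nat.mem_antidiagonalTuple]
      exact ⟨rfl, fun (j : Fin k) => hpos j.succ⟩
  · rintro ⟨⟨s, r⟩, b⟩ hq
    rw [Finset.mem_sigma, Finset.mem_filter, Finset.HasAntidiagonal.mem_antidiagonal,
      Finset.mem_filter, Finset.Nat.mem_antidiagonalTuple] at hq
    obtain ⟨⟨hsr, hs⟩, hb, hbpos⟩ := hq
    rw [Finset.mem_filter, Finset.Nat.mem_antidiagonalTuple]
    constructor
    · rw [Fin.sum_cons, hb, hsr]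
    · intro j
      refine Fin.cases ?_ ?_ j
      · simpa using hs
      · intro i; simpa using hbpos i
  · intro a _
    show Fin.cons (a 0) (Fin.tail a) = a
    exact Fin.cons_self_tail a
  · rintro ⟨⟨s, r⟩, b⟩ hq
    rw [Finset.mem_sigma, Finset.mem_filter, Finset.HasAntidiagonal.mem_antidiagonal,
      Finset.mem_filter, Finset.Nat.mem_antidiagonalTuple] at hq
    obtain ⟨⟨_, _⟩, hb, _⟩ := hq
    simp [Fin.tail_cons, hb]
  · intro a _
    show H a = H (Fin.cons (a 0) (Fin.tail a))
    rw [Fin.cons_self_tail]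

/-- Splitting the sum over antitone functions `Fin (k+1) → Fin (N+1)` according to
whether the value at `0` is the top index. -/
lemma sum_anti_split {k N : ℕ} (G : (Fin (k + 1) → Fin (N + 1)) → ℂ) :
    ∑ f ∈ Finset.univ.filter (fun f : Fin (k + 1) → Fin (N + 1) => Antitone f), G f
      = ∑ g ∈ Finset.univ.filter (fun g : Fin (k + 1) → Fin N => Antitone g),
          G (Fin.castSucc ∘ g)
        + ∑ g ∈ Finset.univ.filter (fun g : Fin k → Fin (N + 1) => Antitone g),
            G (Fin.cons (Fin.last N) g) := by
  rw [← Finset.sum_filter_add_sum_filter_not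
    (Finset.univ.filter (fun f : Fin (k + 1) → Fin (N + 1) => Antitone f))
    (fun f => f 0 = Fin.last N), add_comm]
  congr 1
  · -- `f 0 ≠ last` part: corresponds to antitone maps into `Fin N`
    rw [Finset.filter_filter]
    have key : ∀ (f : Fin (k + 1) → Fin (N + 1)), Antitone f → ¬ f 0 = Fin.last N →
        ∀ j, (f j : ℕ) < N := by
      intro f hf hne j
      have h0 : f 0 < Fin.last N := lt_of_le_of_ne (Fin.le_last _) hne
      have : f j < Fin.last N := lt_of_le_of_lt (hf (Fin.zero_le j)) h0
      simpa [Fin.lt_def] using this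
    refine Finset.sum_bij'
      (fun f hf => fun j => Fin.castLT (f j)
        (key f (Finset.mem_filter.mp hf).2.1 (Finset.mem_filter.mp hf).2.2 j))
      (fun g _ => Fin.castSucc ∘ g) ?_ ?_ ?_ ?_ ?_
    · intro f hf
      rw [Finset.mem_filter] at hf ⊢
      refine ⟨Finset.mem_univ _, ?_⟩
      intro a b hab
      show Fin.castLT (f b) _ ≤ Fin.castLT (f a) _
      rw [Fin.le_def]
      exact Fin.le_def.mp (hf.2.1 hab)
    · intro g hg
      rw [Finset.mem_filter] at hg ⊢
      refine ⟨Finset.mem_univ _, ?_, ?_⟩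
      · intro a b hab
        exact Fin.castSucc_le_castSucc_iff.mpr (hg.2 hab)
      · simp only [Function.comp_apply]
        exact (Fin.castSucc_lt_last _).ne
    · intro f hf
      rfl
    · intro g _
      rfl
    · intro f hf
      rfl
  · -- `f 0 = last` part: corresponds to dropping the first coordinate
    rw [Finset.filter_filter]
    refine Finset.sum_bij' (fun f _ => Fin.tail f)
      (fun g _ => Fin.cons (Fin.last N) g) ?_ ?_ ?_ ?_ ?_
    · intro f hf
      rw [Finset.mem_filter] at hf ⊢
      refine ⟨Finset.mem_univ _, ?_⟩
      intro a b hab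
      exact hf.2.1 (Fin.succ_le_succ_iff.mpr hab)
    · intro g hg
      rw [Finset.mem_filter] at hg ⊢
      refine ⟨Finset.mem_univ _, ?_, by simp⟩
      intro a b hab
      refine Fin.cases ?_ ?_ a hab
      · intro _; exact Fin.le_last _
      · intro a' ha'b
        refine Fin.cases ?_ ?_ b ha'b
        · intro h; exact absurd (Fin.le_zero_iff.mp h) (Fin.succ_ne_zero a')
        · intro b' hab'
          simpa using hg.2 (Fin.succ_le_succ_iff.mp hab')
    · intro f hf
      have h0 : f 0 = Fin.last N := (Finset.mem_filter.mp hf).2.2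
      show Fin.cons (Fin.last N) (Fin.tail f) = f
      rw [← h0, Fin.cons_self_tail]
    · intro g _
      exact @Fin.tail_cons _ (fun _ => Fin (N + 1)) (Fin.last N) g
    · intro f hf
      have h0 : f 0 = Fin.last N := (Finset.mem_filter.mp hf).2.2
      have hc : Fin.cons (Fin.last N) (Fin.tail f) = f := by
        rw [← h0, Fin.cons_self_tail]
      show G f = G (Fin.cons (Fin.last N) (Fin.tail f))
      rw [hc]

/-- The basic recursion for `S*` in the number of variables and the depth. -/
lemma SavgStar_succ_succ {N k n : ℕ} (x : Fin (N + 1) → ℂ) :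
    SavgStar x n (k + 1) = SavgStar (x ∘ Fin.castSucc) n (k + 1)
      + ∑ p ∈ (Finset.HasAntidiagonal.antidiagonal n).filter (fun p => 0 < p.1),
          x (Fin.last N) ^ p.1 * SavgStar x p.2 k := by
  rw [SavgStar_eq_sum, SavgStar_eq_sum]
  have := fun (a : Fin (k + 1) → ℕ) =>
    sum_anti_split (fun f => ∏ j, x (f j) ^ (a j))
  calc
    ∑ a ∈ (Finset.Nat.antidiagonalTuple (k + 1) n).filter (fun a => ∀ j, 0 < a j),
        ∑ f ∈ Finset.univ.filter (fun f : Fin (k + 1) → Fin (N + 1) => Antitone f),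
          ∏ j, x (f j) ^ (a j)
      = ∑ a ∈ (Finset.Nat.antidiagonalTuple (k + 1) n).filter (fun a => ∀ j, 0 < a j),
          (∑ g ∈ Finset.univ.filter (fun g : Fin (k + 1) → Fin N => Antitone g),
            ∏ j, (x ∘ Fin.castSucc) (g j) ^ (a j)
          + ∑ g ∈ Finset.univ.filter (fun g : Fin k → Fin (N + 1) => Antitone g),
            ∏ j, x ((Fin.cons (Fin.last N) g : Fin (k+1) → Fin (N+1)) j) ^ (a j)) := by
        refine Finset.sum_congr rfl fun a _ => ?_
        rw [this a]
        rfl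
    _ = _ := by
        rw [Finset.sum_add_distrib]
        congr 1
        rw [sum_P_succ (fun a => ∑ g ∈ Finset.univ.filter
          (fun g : Fin k → Fin (N + 1) => Antitone g),
            ∏ j, x ((Fin.cons (Fin.last N) g : Fin (k+1) → Fin (N+1)) j) ^ (a j))]
        refine Finset.sum_congr rfl fun p hp => ?_
        rw [SavgStar_eq_sum, Finset.mul_sum]
        refine Finset.sum_congr rfl fun b _ => ?_
        rw [Finset.mul_sum]
        refine Finset.sum_congr rfl fun g _ => ?_
        rw [Fin.prod_univ_succ]
        simp only [Fin.cons_zero, Fin.cons_succ]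

/-- The coefficient `c_n = ∑_k S*(n,k) y^k`. -/
noncomputable def cseq {N : ℕ} (x : Fin N → ℂ) (y : ℂ) (n : ℕ) : ℂ :=
  ∑ k ∈ range (n + 1), SavgStar x n k * y ^ k

lemma cseq_fin_zero (x : Fin 0 → ℂ) (y : ℂ) (n : ℕ) :
    cseq x y n = if n = 0 then 1 else 0 := by
  unfold cseq
  cases n with
  | zero => simp [SavgStar_fin_zero]
  | succ n => simp [SavgStar_fin_zero]

lemma sum_big_range {N : ℕ} (x : Fin N → ℂ) (y : ℂ) {r M : ℕ} (h : r < M) :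
    ∑ k ∈ range M, SavgStar x r k * y ^ k = cseq x y r := by
  unfold cseq
  refine (Finset.sum_subset (Finset.range_subset_range.mpr h) ?_).symm
  intro k _ hk
  rw [Finset.mem_range, not_lt] at hk
  rw [SavgStar_eq_zero x (by omega), zero_mul]

lemma sum_adfilter (n : ℕ) (F : ℕ → ℕ → ℂ) :
    ∑ p ∈ (Finset.HasAntidiagonal.antidiagonal n).filter (fun p => 0 < p.1), F p.1 p.2
      = ∑ s ∈ range n, F (s + 1) (n - (s + 1)) := by
  rw [Finset.sum_filter, Finset.Nat.sum_antidiagonal_eq_sum_range_succ_mk,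
    Finset.sum_range_succ']
  simp

lemma cseq_peel {N : ℕ} (x : Fin N → ℂ) (y : ℂ) (n : ℕ) :
    cseq x y n = (∑ k ∈ range n, SavgStar x n (k + 1) * y ^ (k + 1))
      + (if n = 0 then 1 else 0) := by
  unfold cseq
  rw [Finset.sum_range_succ']
  rw [SavgStar_zero]
  simp

lemma cseq_rec {N : ℕ} (x : Fin (N + 1) → ℂ) (y : ℂ) (n : ℕ) :
    cseq x y n = cseq (x ∘ Fin.castSucc) y n
      + y * ∑ s ∈ range n, x (Fin.last N) ^ (s + 1) * cseq x y (n - (s + 1)) := by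
  rw [cseq_peel x y n, cseq_peel (x ∘ Fin.castSucc) y n]
  have key : ∀ k, SavgStar x n (k + 1) * y ^ (k + 1)
      = SavgStar (x ∘ Fin.castSucc) n (k + 1) * y ^ (k + 1)
        + (∑ p ∈ (Finset.HasAntidiagonal.antidiagonal n).filter (fun p => 0 < p.1),
            x (Fin.last N) ^ p.1 * SavgStar x p.2 k) * y ^ (k + 1) := by
    intro k
    rw [SavgStar_succ_succ, add_mul]
  calc
    (∑ k ∈ range n, SavgStar x n (k + 1) * y ^ (k + 1)) + (if n = 0 then 1 else 0)
      = ((∑ k ∈ range n, SavgStar (x ∘ Fin.castSucc) n (k + 1) * y ^ (k + 1))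
          + (if n = 0 then 1 else 0))
        + ∑ k ∈ range n, (∑ p ∈ (Finset.HasAntidiagonal.antidiagonal n).filter (fun p => 0 < p.1),
            x (Fin.last N) ^ p.1 * SavgStar x p.2 k) * y ^ (k + 1) := by
        rw [Finset.sum_congr rfl fun k _ => key k, Finset.sum_add_distrib]
        ring
    _ = _ := by
        congr 1
        calc
          ∑ k ∈ range n, (∑ p ∈ (Finset.HasAntidiagonal.antidiagonal n).filter (fun p => 0 < p.1),
              x (Fin.last N) ^ p.1 * SavgStar x p.2 k) * y ^ (k + 1)
            = ∑ k ∈ range n, ∑ s ∈ range n,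
                x (Fin.last N) ^ (s + 1) * SavgStar x (n - (s + 1)) k * y ^ (k + 1) := by
              refine Finset.sum_congr rfl fun k _ => ?_
              rw [sum_adfilter n (fun s r => x (Fin.last N) ^ s * SavgStar x r k),
                Finset.sum_mul]
          _ = ∑ s ∈ range n, x (Fin.last N) ^ (s + 1)
                * (y * ∑ k ∈ range n, SavgStar x (n - (s + 1)) k * y ^ k) := by
              rw [Finset.sum_comm]
              refine Finset.sum_congr rfl fun s _ => ?_
              rw [Finset.mul_sum, Finset.mul_sum]
              refine Finset.sum_congr rfl fun k _ => ?_
              ring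
          _ = y * ∑ s ∈ range n, x (Fin.last N) ^ (s + 1) * cseq x y (n - (s + 1)) := by
              rw [Finset.mul_sum]
              refine Finset.sum_congr rfl fun s hs => ?_
              have hs' : s < n := Finset.mem_range.mp hs
              rw [sum_big_range x y (show n - (s + 1) < n by omega)]
              ring

lemma triangle (n : ℕ) (T : ℕ → ℕ → ℂ) :
    ∑ s ∈ range n, ∑ u ∈ range (n - s), T s u
      = ∑ m ∈ range n, ∑ u ∈ range (m + 1), T (m - u) u := by
  rw [Finset.sum_sigma', Finset.sum_sigma']
  refine Finset.sum_nbij' (fun q => ⟨q.1 + q.2, q.2⟩) (fun q => ⟨q.1 - q.2, q.2⟩)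
    ?_ ?_ ?_ ?_ ?_
  · rintro ⟨s, u⟩ hq
    simp only [Finset.mem_sigma, Finset.mem_range] at hq ⊢
    omega
  · rintro ⟨m, u⟩ hq
    simp only [Finset.mem_sigma, Finset.mem_range] at hq ⊢
    omega
  · rintro ⟨s, u⟩ _
    simp
  · rintro ⟨m, u⟩ hq
    simp only [Finset.mem_sigma, Finset.mem_range] at hq
    have : m - u + u = m := by omega
    simp [this]
  · rintro ⟨s, u⟩ _
    simp

lemma cseq_closed {N : ℕ} (x : Fin (N + 1) → ℂ) (y : ℂ) (n : ℕ) :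
    cseq x y n = ∑ m ∈ range (n + 1),
      wc y m * x (Fin.last N) ^ m * cseq (x ∘ Fin.castSucc) y (n - m) := by
  induction n using Nat.strong_induction_on with
  | _ n ih =>
    rw [cseq_rec]
    rw [Finset.sum_range_succ' (fun m =>
      wc y m * x (Fin.last N) ^ m * cseq (x ∘ Fin.castSucc) y (n - m))]
    have h0 : wc y 0 * x (Fin.last N) ^ 0 * cseq (x ∘ Fin.castSucc) y (n - 0)
        = cseq (x ∘ Fin.castSucc) y n := by simp [wc]
    rw [h0, add_comm _ (cseq (x ∘ Fin.castSucc) y n)]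
    congr 1
    calc
      y * ∑ s ∈ range n, x (Fin.last N) ^ (s + 1) * cseq x y (n - (s + 1))
        = ∑ s ∈ range n, ∑ u ∈ range (n - s),
            y * wc y u * x (Fin.last N) ^ (s + 1 + u)
              * cseq (x ∘ Fin.castSucc) y (n - (s + 1) - u) := by
          rw [Finset.mul_sum]
          refine Finset.sum_congr rfl fun s hs => ?_
          have hs' : s < n := Finset.mem_range.mp hs
          rw [ih (n - (s + 1)) (by omega)]
          have hrange : n - (s + 1) + 1 = n - s := by omega
          rw [hrange, Finset.mul_sum, Finset.mul_sum]
          refine Finset.sum_congr rfl fun u _ => ?_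
          rw [pow_add]
          ring
      _ = ∑ m ∈ range n, ∑ u ∈ range (m + 1),
            y * wc y u * x (Fin.last N) ^ (m + 1)
              * cseq (x ∘ Fin.castSucc) y (n - (m + 1)) := by
          rw [triangle n (fun s u => y * wc y u * x (Fin.last N) ^ (s + 1 + u)
            * cseq (x ∘ Fin.castSucc) y (n - (s + 1) - u))]
          refine Finset.sum_congr rfl fun m hm => ?_
          refine Finset.sum_congr rfl fun u hu => ?_
          have hu' : u ≤ m := by
            have := Finset.mem_range.mp hu; omega
          rw [show m - u + 1 + u = m + 1 by omega, show n - (m - u + 1) - u = n - (m + 1) by omega]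
      _ = ∑ m ∈ range n, wc y (m + 1) * x (Fin.last N) ^ (m + 1)
            * cseq (x ∘ Fin.castSucc) y (n - (m + 1)) := by
          refine Finset.sum_congr rfl fun m _ => ?_
          rw [← Finset.sum_mul, ← Finset.sum_mul]
          congr 1
          rw [← Finset.mul_sum, sum_wc]
          rfl

/-- The single-factor geometric series. -/
lemma factor_hasSum (y t z : ℂ) (h1 : ‖t * z‖ < 1) (h2 : ‖(y + 1) * t * z‖ < 1) :
    HasSum (fun m : ℕ => wc y m * (t * z) ^ m) ((1 - t * z) / (1 - (y + 1) * t * z)) := by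
  have hgeom : HasSum (fun m : ℕ => ((y + 1) * t * z) ^ m) (1 - (y + 1) * t * z)⁻¹ :=
    hasSum_geometric_of_norm_lt_one h2
  have hmul := hgeom.mul_left (y * (t * z))
  have heq : (fun m : ℕ => wc y (m + 1) * (t * z) ^ (m + 1))
      = fun m : ℕ => y * (t * z) * ((y + 1) * t * z) ^ m := by
    funext m
    show y * (y + 1) ^ m * (t * z) ^ (m + 1) = y * (t * z) * ((y + 1) * t * z) ^ m
    simp only [mul_pow, pow_succ]
    ring
  have h3 : HasSum (fun m : ℕ => wc y (m + 1) * (t * z) ^ (m + 1))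
      (y * (t * z) * (1 - (y + 1) * t * z)⁻¹) := heq ▸ hmul
  have h4 := (hasSum_nat_add_iff (f := fun m : ℕ => wc y m * (t * z) ^ m) 1).mp h3
  have hne : 1 - (y + 1) * t * z ≠ 0 := by
    intro h
    rw [sub_eq_zero] at h
    rw [← h] at h2
    simp at h2
  have : y * (t * z) * (1 - (y + 1) * t * z)⁻¹ + ∑ i ∈ range 1, wc y i * (t * z) ^ i
      = (1 - t * z) / (1 - (y + 1) * t * z) := by
    rw [Finset.sum_range_one]
    show y * (t * z) * (1 - (y + 1) * t * z)⁻¹ + 1 * (t * z) ^ 0 = _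
    rw [eq_div_iff hne, add_mul, inv_mul_cancel_right₀ hne]
    ring
  rwa [this] at h4

end HoffmanAux

open HoffmanAux in
/-- The generating product identity (2.1d) for the averages of multiple zeta star
values of fixed weight and depth. -/
theorem hoffman_generating_product_star (N : ℕ) (x : Fin N → ℂ) (t y : ℂ)
    (ht : ∀ i, ‖t * x i‖ < 1) (hty : ∀ i, ‖(y + 1) * t * x i‖ < 1) :
    HasSum (fun n : ℕ => (∑ k ∈ Finset.range (n + 1), SavgStar x n k * y ^ k) * t ^ n)
      (∏ i, (1 - t * x i) / (1 - (y + 1) * t * x i)) := by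
  induction N with
  | zero =>
    have : (fun n : ℕ => (∑ k ∈ Finset.range (n + 1), SavgStar x n k * y ^ k) * t ^ n)
        = fun n : ℕ => if n = 0 then 1 else 0 := by
      funext n
      have := cseq_fin_zero x y n
      unfold cseq at this
      rw [this]
      by_cases h : n = 0 <;> simp [h]
    rw [this]
    simpa using hasSum_ite_eq (0 : ℕ) (1 : ℂ)
  | succ N ih =>
    -- the inductive series
    set x' : Fin N → ℂ := x ∘ Fin.castSucc with hx'
    have ihx := ih x' (fun i => ht _) (fun i => hty _)
    set X := x (Fin.last N) with hX
    -- the new factor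
    have hfac := factor_hasSum y t X (ht _) (hty _)
    -- Cauchy product
    set u : ℕ → ℂ := fun r => (∑ k ∈ Finset.range (r + 1), SavgStar x' r k * y ^ k) * t ^ r
      with hu
    set v : ℕ → ℂ := fun m => wc y m * (t * X) ^ m with hv
    have hUsum : Summable u := ihx.summable
    have hVsum : Summable v := hfac.summable
    have hUn : Summable (fun r => ‖u r‖) := summable_norm_iff.mpr hUsum
    have hVn : Summable (fun m => ‖v m‖) := summable_norm_iff.mpr hVsum
    have hcauchy : Summable (fun n => ∑ p ∈ Finset.HasAntidiagonal.antidiagonal n, u p.1 * v p.2) :=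
      (summable_norm_sum_mul_antidiagonal_of_summable_norm hUn hVn).of_norm
    have htsum : (∑' n, ∑ p ∈ Finset.HasAntidiagonal.antidiagonal n, u p.1 * v p.2)
        = (∑' r, u r) * (∑' m, v m) :=
      (tsum_mul_tsum_eq_tsum_sum_antidiagonal_of_summable_norm hUn hVn).symm
    have hprod : HasSum (fun n => ∑ p ∈ Finset.HasAntidiagonal.antidiagonal n, u p.1 * v p.2)
        ((∏ i, (1 - t * x' i) / (1 - (y + 1) * t * x' i))
          * ((1 - t * X) / (1 - (y + 1) * t * X))) := by
      have := hcauchy.hasSum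
      rwa [htsum, ihx.tsum_eq, hfac.tsum_eq] at this
    -- identify coefficients
    have hcoeff : ∀ n, (∑ p ∈ Finset.HasAntidiagonal.antidiagonal n, u p.1 * v p.2)
        = (∑ k ∈ Finset.range (n + 1), SavgStar x n k * y ^ k) * t ^ n := by
      intro n
      have step1 : ∑ p ∈ Finset.HasAntidiagonal.antidiagonal n, u p.1 * v p.2
          = ∑ p ∈ Finset.HasAntidiagonal.antidiagonal n,
              (wc y p.2 * X ^ p.2 * cseq x' y p.1) * t ^ n := by
        refine Finset.sum_congr rfl fun p hp => ?_
        have hpn : p.1 + p.2 = n := Finset.HasAntidiagonal.mem_antidiagonal.mp hp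
        rw [hu, hv]
        show (cseq x' y p.1) * t ^ p.1 * (wc y p.2 * (t * X) ^ p.2) = _
        rw [mul_pow, ← hpn, pow_add]
        ring
      rw [step1, ← Finset.sum_mul]
      congr 1
      have hswap := Finset.Nat.sum_antidiagonal_swap
        (n := n) (f := fun p : ℕ × ℕ => wc y p.1 * X ^ p.1 * cseq x' y p.2)
      simp only [Prod.fst_swap, Prod.snd_swap] at hswap
      rw [hswap, Finset.Nat.sum_antidiagonal_eq_sum_range_succ_mk]
      exact (cseq_closed x y n).symm
    have : (fun n => ∑ p ∈ Finset.HasAntidiagonal.antidiagonal n, u p.1 * v p.2)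
        = fun n : ℕ => (∑ k ∈ Finset.range (n + 1), SavgStar x n k * y ^ k) * t ^ n :=
      funext hcoeff
    rw [this] at hprod
    rw [Fin.prod_univ_castSucc]
    exact hprod
end

section
/- Let ν ∈ ℂ with ν not equal to any negative integer, and let n ≥ 0. Then ∑_{l=0}^{2n} (−1)^l / (l! · (ν+1)_l · (2n−l)! · (ν+1)_{2n−l}) = (−1)^n / (n! · (ν+1)_n · (ν+1)_{2n}). -/
/-- The general summand. -/
noncomputable def trm (ν : ℂ) (m l : ℕ) : ℂ :=
  (-1 : ℂ) ^ l / ((Nat.factorial l : ℂ) * poch (ν + 1) l *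
    (Nat.factorial (m - l) : ℂ) * poch (ν + 1) (m - l))

/-- The telescoping certificate function (WZ-style). -/
noncomputable def gfun (ν : ℂ) (m l : ℕ) : ℂ :=
  (-1 : ℂ) ^ l * ((l : ℂ) * ((l : ℂ) + ν) *
      (-2 * (l : ℂ) ^ 2 + (6 * (m : ℂ) + 4 * ν - 2) * (l : ℂ) +
        (3 * (m : ℂ) - 5 * (m : ℂ) ^ 2 + 2 * ν - 2 * ν ^ 2 - 7 * (m : ℂ) * ν))) /
    ((Nat.factorial l : ℂ) * poch (ν + 1) l *
      (Nat.factorial (m - l) : ℂ) * poch (ν + 1) (m - l))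

lemma poch_zero (x : ℂ) : poch x 0 = 1 := by simp [poch]

lemma poch_succ (x : ℂ) (m : ℕ) : poch x (m + 1) = poch x m * (x + m) := by
  simp [poch, ascPochhammer_succ_right]

lemma poch_ne (ν : ℂ) (hν : ∀ k : ℕ, ν ≠ -((k : ℂ) + 1)) (m : ℕ) :
    poch (ν + 1) m ≠ 0 := by
  induction m with
  | zero => simp [poch_zero]
  | succ m ih =>
    rw [poch_succ]; exact mul_ne_zero ih (fun h => hν m (by linear_combination h))

set_option maxHeartbeats 1600000 in
lemma step (ν : ℂ) (hν : ∀ k : ℕ, ν ≠ -((k : ℂ) + 1)) (l k : ℕ) :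
    ((l + k + 1 : ℕ) : ℂ) * (((l + k + 1 : ℕ) : ℂ) + ν) * (((l + k + 1 : ℕ) : ℂ) + 2 * ν) *
        (((l + k + 1 : ℕ) : ℂ) + ν - 1) * trm ν (l + k + 1) l
      + 4 * (((k + 1 : ℕ) : ℂ) * ((k : ℕ) : ℂ) * (ν + ((k + 1 : ℕ) : ℂ)) * (ν + ((k : ℕ) : ℂ)) *
        trm ν (l + k + 1) l)
    = gfun ν (l + k + 1) (l + 1) - gfun ν (l + k + 1) l := by
  have h1 : (ν + 1 + (l : ℂ)) ≠ 0 := fun h => hν l (by linear_combination h)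
  have h2 : (ν + 1 + (k : ℂ)) ≠ 0 := fun h => hν k (by linear_combination h)
  have h3 : ((Nat.factorial l : ℕ) : ℂ) ≠ 0 := Nat.cast_ne_zero.mpr (Nat.factorial_ne_zero l)
  have h4 : ((Nat.factorial k : ℕ) : ℂ) ≠ 0 := Nat.cast_ne_zero.mpr (Nat.factorial_ne_zero k)
  have h5 := poch_ne ν hν l
  have h6 := poch_ne ν hν k
  have h7 : ((l : ℂ) + 1) ≠ 0 := Nat.cast_add_one_ne_zero l
  have h8 : ((k : ℂ) + 1) ≠ 0 := Nat.cast_add_one_ne_zero k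
  simp only [trm, gfun, show l + k + 1 - l = k + 1 by omega,
    show l + k + 1 - (l + 1) = k by omega, poch_succ, Nat.factorial_succ]
  push_cast
  rw [eq_sub_iff_add_eq]
  simp only [mul_div_assoc']
  rw [div_add_div _ _ (by apply_rules [mul_ne_zero]) (by apply_rules [mul_ne_zero]),
    div_add_div _ _ (by apply_rules [mul_ne_zero]) (by apply_rules [mul_ne_zero]),
    div_eq_div_iff (by apply_rules [mul_ne_zero]) (by apply_rules [mul_ne_zero])]
  ring

lemma ext_eq (ν : ℂ) (hν : ∀ k : ℕ, ν ≠ -((k : ℂ) + 1)) (l k : ℕ) :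
    ((k + 1 + 1 : ℕ) : ℂ) * ((k + 1 : ℕ) : ℂ) * (ν + ((k + 1 + 1 : ℕ) : ℂ)) *
        (ν + ((k + 1 : ℕ) : ℂ)) * trm ν (l + k + 2) l = trm ν (l + k) l := by
  have h1 : (ν + 1 + (k : ℂ)) ≠ 0 := fun h => hν k (by linear_combination h)
  have h2 : (ν + 1 + ((k : ℂ) + 1)) ≠ 0 := fun h => hν (k + 1) (by push_cast; linear_combination h)
  have h3 : ((Nat.factorial l : ℕ) : ℂ) ≠ 0 := Nat.cast_ne_zero.mpr (Nat.factorial_ne_zero l)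
  have h4 : ((Nat.factorial k : ℕ) : ℂ) ≠ 0 := Nat.cast_ne_zero.mpr (Nat.factorial_ne_zero k)
  have h5 := poch_ne ν hν l
  have h6 := poch_ne ν hν k
  have h8 : ((k : ℂ) + 1) ≠ 0 := Nat.cast_add_one_ne_zero k
  have h9 : ((k : ℂ) + 1 + 1) ≠ 0 := fun h => by
    have := Nat.cast_add_one_ne_zero (R := ℂ) (k + 1); push_cast at this
    exact this (by linear_combination h)
  simp only [trm, show l + k + 2 - l = k + 1 + 1 by omega, show l + k - l = k by omega,
    poch_succ, Nat.factorial_succ]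
  push_cast
  simp only [mul_div_assoc']
  rw [div_eq_div_iff (by apply_rules [mul_ne_zero]) (by apply_rules [mul_ne_zero])]
  ring

lemma gfun_zero (ν : ℂ) (m : ℕ) : gfun ν m 0 = 0 := by
  simp [gfun]

lemma bound (ν : ℂ) (hν : ∀ k : ℕ, ν ≠ -((k : ℂ) + 1)) (m : ℕ) :
    ((m : ℕ) : ℂ) * (((m : ℕ) : ℂ) + ν) * (((m : ℕ) : ℂ) + 2 * ν) * (((m : ℕ) : ℂ) + ν - 1) *
        trm ν m m + gfun ν m m = 0 := by
  have h3 : ((Nat.factorial m : ℕ) : ℂ) ≠ 0 := Nat.cast_ne_zero.mpr (Nat.factorial_ne_zero m)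
  have h5 := poch_ne ν hν m
  simp only [trm, gfun, Nat.sub_self, Nat.factorial_zero, poch_zero, Nat.cast_one, mul_one]
  simp only [mul_div_assoc']
  rw [← add_div, div_eq_zero_iff]
  left
  ring

lemma recur (ν : ℂ) (hν : ∀ k : ℕ, ν ≠ -((k : ℂ) + 1)) (n : ℕ) :
    ((2 * n + 2 : ℕ) : ℂ) * (((2 * n + 2 : ℕ) : ℂ) + ν) * (((2 * n + 2 : ℕ) : ℂ) + 2 * ν) *
        (((2 * n + 2 : ℕ) : ℂ) + ν - 1) * ∑ l ∈ Finset.range (2 * n + 2 + 1), trm ν (2 * n + 2) l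
      + 4 * ∑ l ∈ Finset.range (2 * n + 1), trm ν (2 * n) l = 0 := by
  set Cc : ℂ := ((2 * n + 2 : ℕ) : ℂ) * (((2 * n + 2 : ℕ) : ℂ) + ν) *
    (((2 * n + 2 : ℕ) : ℂ) + 2 * ν) * (((2 * n + 2 : ℕ) : ℂ) + ν - 1) with hCc
  set E : ℕ → ℂ := fun l => ((2 * n + 1 - l + 1 : ℕ) : ℂ) * ((2 * n + 1 - l : ℕ) : ℂ) *
    (ν + ((2 * n + 1 - l + 1 : ℕ) : ℂ)) * (ν + ((2 * n + 1 - l : ℕ) : ℂ)) *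
    trm ν (2 * n + 2) l with hEdef
  have hElast : E (2 * n + 1) = 0 := by
    simp [hEdef, show 2 * n + 1 - (2 * n + 1) = 0 by omega]
  have hE2 : ∀ l ∈ Finset.range (2 * n + 1), E l = trm ν (2 * n) l := by
    intro l hl
    have hl' : l ≤ 2 * n := by simpa [Nat.lt_succ_iff] using hl
    have h := ext_eq ν hν l (2 * n - l)
    rw [show 2 * n - l + 1 = 2 * n + 1 - l by omega] at h
    rw [show l + (2 * n - l) + 2 = 2 * n + 2 by omega] at h
    rw [show l + (2 * n - l) = 2 * n by omega] at h
    exact h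
  have hE' : ∑ l ∈ Finset.range (2 * n + 2), E l
      = ∑ l ∈ Finset.range (2 * n + 1), trm ν (2 * n) l := by
    rw [Finset.sum_range_succ, hElast, add_zero]
    exact Finset.sum_congr rfl hE2
  have hT : ∀ l ∈ Finset.range (2 * n + 2),
      Cc * trm ν (2 * n + 2) l + 4 * E l
        = gfun ν (2 * n + 2) (l + 1) - gfun ν (2 * n + 2) l := by
    intro l hl
    have hl' : l ≤ 2 * n + 1 := by simpa [Nat.lt_succ_iff] using hl
    have h := step ν hν l (2 * n + 1 - l)
    rw [show l + (2 * n + 1 - l) + 1 = 2 * n + 2 by omega] at h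
    exact h
  have tele : ∑ l ∈ Finset.range (2 * n + 2), (Cc * trm ν (2 * n + 2) l + 4 * E l)
      = gfun ν (2 * n + 2) (2 * n + 2) - gfun ν (2 * n + 2) 0 := by
    rw [Finset.sum_congr rfl hT, Finset.sum_range_sub]
  have hsplit : ∑ l ∈ Finset.range (2 * n + 2 + 1), trm ν (2 * n + 2) l
      = (∑ l ∈ Finset.range (2 * n + 2), trm ν (2 * n + 2) l) + trm ν (2 * n + 2) (2 * n + 2) :=
    Finset.sum_range_succ _ _
  have hdistrib : ∑ l ∈ Finset.range (2 * n + 2), (Cc * trm ν (2 * n + 2) l + 4 * E l)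
      = Cc * ∑ l ∈ Finset.range (2 * n + 2), trm ν (2 * n + 2) l
        + 4 * ∑ l ∈ Finset.range (2 * n + 2), E l := by
    rw [Finset.sum_add_distrib, ← Finset.mul_sum, ← Finset.mul_sum]
  have hg0 : gfun ν (2 * n + 2) 0 = 0 := gfun_zero ν _
  have hb := bound ν hν (2 * n + 2)
  linear_combination Cc * hsplit - 4 * hE' - hdistrib + tele - hg0 + hb

/-- The alternating convolution identity equivalent to Kummer's evaluation of
`₂F₁(−2n, −2n−ν; ν+1; −1)`. -/
theorem kummer_convolution (ν : ℂ) (hν : ∀ k : ℕ, ν ≠ -((k : ℂ) + 1)) (n : ℕ) :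
    ∑ l ∈ Finset.range (2 * n + 1),
        (-1 : ℂ) ^ l / ((Nat.factorial l : ℂ) * poch (ν + 1) l *
          (Nat.factorial (2 * n - l) : ℂ) * poch (ν + 1) (2 * n - l)) =
      (-1 : ℂ) ^ n / ((Nat.factorial n : ℂ) * poch (ν + 1) n * poch (ν + 1) (2 * n)) := by
  induction n with
  | zero =>
    norm_num [Finset.sum_range_succ, poch_zero]
  | succ n ih =>
    have ih' : ∑ l ∈ Finset.range (2 * n + 1), trm ν (2 * n) l
        = (-1 : ℂ) ^ n / ((Nat.factorial n : ℂ) * poch (ν + 1) n * poch (ν + 1) (2 * n)) := ih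
    have key := recur ν hν n
    rw [ih'] at key
    rw [show 2 * (n + 1) = 2 * n + 2 by ring]
    show ∑ l ∈ Finset.range (2 * n + 2 + 1), trm ν (2 * n + 2) l
      = (-1 : ℂ) ^ (n + 1) / ((Nat.factorial (n + 1) : ℂ) * poch (ν + 1) (n + 1) *
          poch (ν + 1) (2 * n + 2))
    have hc1 : ((2 * n + 2 : ℕ) : ℂ) ≠ 0 := Nat.cast_ne_zero.mpr (by omega)
    have hc2 : ((2 * n + 2 : ℕ) : ℂ) + ν ≠ 0 := fun h =>
      hν (2 * n + 1) (by push_cast at h ⊢; linear_combination h)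
    have hc3 : ((2 * n + 2 : ℕ) : ℂ) + 2 * ν ≠ 0 := fun h =>
      hν n (by push_cast at h ⊢; linear_combination h / 2)
    have hc4 : ((2 * n + 2 : ℕ) : ℂ) + ν - 1 ≠ 0 := fun h =>
      hν (2 * n) (by push_cast at h ⊢; linear_combination h)
    have hCcne : ((2 * n + 2 : ℕ) : ℂ) * (((2 * n + 2 : ℕ) : ℂ) + ν) *
        (((2 * n + 2 : ℕ) : ℂ) + 2 * ν) * (((2 * n + 2 : ℕ) : ℂ) + ν - 1) ≠ 0 :=
      mul_ne_zero (mul_ne_zero (mul_ne_zero hc1 hc2) hc3) hc4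
    have hfn : ((Nat.factorial n : ℕ) : ℂ) ≠ 0 := Nat.cast_ne_zero.mpr (Nat.factorial_ne_zero n)
    have hpn := poch_ne ν hν n
    have hp2n := poch_ne ν hν (2 * n)
    have hDn : ((Nat.factorial n : ℕ) : ℂ) * poch (ν + 1) n * poch (ν + 1) (2 * n) ≠ 0 :=
      mul_ne_zero (mul_ne_zero hfn hpn) hp2n
    have hA : ∑ l ∈ Finset.range (2 * n + 2 + 1), trm ν (2 * n + 2) l
        = (-(4 : ℂ) * (-1 : ℂ) ^ n) /
          (((Nat.factorial n : ℂ) * poch (ν + 1) n * poch (ν + 1) (2 * n)) *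
           (((2 * n + 2 : ℕ) : ℂ) * (((2 * n + 2 : ℕ) : ℂ) + ν) *
            (((2 * n + 2 : ℕ) : ℂ) + 2 * ν) * (((2 * n + 2 : ℕ) : ℂ) + ν - 1))) := by
      rw [eq_div_iff (mul_ne_zero hDn hCcne)]
      field_simp [hfn, hpn, hp2n] at key
      push_cast at key ⊢
      linear_combination key
    have hp1 : poch (ν + 1) (2 * n + 2)
        = poch (ν + 1) (2 * n) * (ν + 1 + ((2 * n : ℕ) : ℂ)) *
          (ν + 1 + ((2 * n + 1 : ℕ) : ℂ)) := by
      rw [show 2 * n + 2 = 2 * n + 1 + 1 by omega, poch_succ, poch_succ]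
    have hx1 : ν + 1 + (n : ℂ) ≠ 0 := fun h => hν n (by linear_combination h)
    have hx2 : ν + 1 + ((2 * n : ℕ) : ℂ) ≠ 0 := fun h =>
      hν (2 * n) (by push_cast at h ⊢; linear_combination h)
    have hx3 : ν + 1 + ((2 * n + 1 : ℕ) : ℂ) ≠ 0 := fun h =>
      hν (2 * n + 1) (by push_cast at h ⊢; linear_combination h)
    have hn1 : ((n : ℂ) + 1) ≠ 0 := Nat.cast_add_one_ne_zero n
    rw [hA, hp1, poch_succ, Nat.factorial_succ]
    push_cast at hx2 hx3 hc1 hc2 hc3 hc4 ⊢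
    rw [div_eq_div_iff (by apply_rules [mul_ne_zero]) (by apply_rules [mul_ne_zero])]
    ring
end

section
/- Let ν ∈ ℂ with ν not equal to any negative integer, and let z : ℕ≥1 → ℂ be a sequence of nonzero complex numbers such that (k ↦ 1/z_k²) is summable and, for every t ∈ ℂ, the infinite product ∏_{k≥1} (1 − t²/z_k²) converges with value ∑_{m≥0} (−1)^m/(m! (ν+1)_m) · (t/2)^{2m}. Then for every n ≥ 0, the Bessel multiple zeta value ζ_{B,ν}({2}^n) := ∑_{k₁>k₂>⋯>k_n≥1} ∏_{i=1}^n 1/z_{k_i}² equals 1/(2^{2n} · n! · (ν+1)_n). -/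
open Filter Finset
open scoped Topology NNReal

/-- Summability of products over finsets, real nonneg version. -/
lemma summable_finsetProd_real {b : ℕ → ℝ} (hb : Summable b) (hb0 : ∀ k, 0 ≤ b k) :
    Summable (fun A : Finset ℕ => ∏ k ∈ A, b k) := by
  apply summable_of_sum_le (c := Real.exp (∑' k, b k))
    (fun A => Finset.prod_nonneg fun k _ => hb0 k)
  intro S
  set s : Finset ℕ := S.sup id with hs
  have hsub : S ⊆ s.powerset := fun A hA => Finset.mem_powerset.mpr (Finset.le_sup (f := id) hA)
  calc ∑ A ∈ S, ∏ k ∈ A, b k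
      ≤ ∑ A ∈ s.powerset, ∏ k ∈ A, b k := by
        apply Finset.sum_le_sum_of_subset_of_nonneg hsub
        intro A _ _
        exact Finset.prod_nonneg fun k _ => hb0 k
    _ = ∏ k ∈ s, (b k + 1) := by
        rw [Finset.prod_add]
        simp
    _ ≤ ∏ k ∈ s, Real.exp (b k) := by
        apply Finset.prod_le_prod
        · intro k _; have := hb0 k; linarith
        · intro k _; exact Real.add_one_le_exp (b k)
    _ = Real.exp (∑ k ∈ s, b k) := by rw [Real.exp_sum]
    _ ≤ Real.exp (∑' k, b k) := by
        apply Real.exp_le_exp.mpr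
        exact Summable.sum_le_tsum s (fun k _ => hb0 k) hb

/-- Summability of products over finsets, complex version. -/
lemma summable_finsetProd {x : ℕ → ℂ} (hx : Summable x) :
    Summable (fun A : Finset ℕ => ∏ k ∈ A, x k) := by
  have hb : Summable (fun k => ‖x k‖) := summable_norm_iff.mpr hx
  apply Summable.of_norm
  have key : ∀ A : Finset ℕ, ‖∏ k ∈ A, x k‖ = ∏ k ∈ A, ‖x k‖ := fun A => norm_prod _ _
  simp_rw [key]
  exact summable_finsetProd_real hb (fun k => norm_nonneg _)

/-- The infinite product of `1 + x k` is the sum of products over finsets. -/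
lemma hasProd_one_add {x : ℕ → ℂ} (hx : Summable x) :
    HasProd (fun k => 1 + x k) (∑' A : Finset ℕ, ∏ k ∈ A, x k) := by
  have hs := (summable_finsetProd hx).hasSum
  have hpw : Tendsto (fun s : Finset ℕ => s.powerset) atTop atTop :=
    tendsto_atTop_finset_of_monotone (fun s t hst => Finset.powerset_mono.mpr hst)
      (fun A => ⟨A, Finset.mem_powerset_self A⟩)
  have h := hs.comp hpw
  refine h.congr fun s => ?_
  simp only [Function.comp]
  rw [show (fun k => (1 : ℂ) + x k) = (fun k => x k + 1) by funext k; ring]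
  rw [Finset.prod_add]
  simp

/-- The equivalence between finsets of `ℕ` and the sigma type of finsets sorted by card. -/
def cardSigmaEquiv : (Σ n : ℕ, {A : Finset ℕ // A.card = n}) ≃ Finset ℕ where
  toFun p := p.2.1
  invFun A := ⟨A.card, A, rfl⟩
  left_inv := by rintro ⟨n, A, rfl⟩; rfl
  right_inv A := rfl

lemma tsum_finset_card {M : Type*} [AddCommGroup M] [UniformSpace M] [IsUniformAddGroup M]
    [CompleteSpace M] [T0Space M] {g : Finset ℕ → M} (hg : Summable g) :
    ∑' A : Finset ℕ, g A = ∑' (n : ℕ) (A : {A : Finset ℕ // A.card = n}), g A.1 := by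
  rw [← cardSigmaEquiv.tsum_eq g]
  exact Summable.tsum_sigma (cardSigmaEquiv.summable_iff.mpr hg)

lemma summable_fiber_card {M : Type*} [AddCommGroup M] [UniformSpace M] [IsUniformAddGroup M]
    [CompleteSpace M] {g : Finset ℕ → M} (hg : Summable g) :
    Summable (fun n : ℕ => ∑' A : {A : Finset ℕ // A.card = n}, g A.1) :=
  (cardSigmaEquiv.summable_iff.mpr hg).sigma

lemma summable_subtype_card {M : Type*} [AddCommGroup M] [UniformSpace M] [IsUniformAddGroup M]
    [CompleteSpace M] {g : Finset ℕ → M} (hg : Summable g) (n : ℕ) :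
    Summable (fun A : {A : Finset ℕ // A.card = n} => g A.1) :=
  hg.comp_injective Subtype.val_injective

/-- Strictly decreasing tuples vs finsets of fixed card. -/
noncomputable def finsetEquivAnti (n : ℕ) :
    {A : Finset ℕ // A.card = n} ≃ {f : Fin n → ℕ // StrictAnti f} where
  toFun A := ⟨fun i => A.1.orderEmbOfFin A.2 i.rev, by
    intro i j hij
    exact (A.1.orderEmbOfFin A.2).strictMono (Fin.rev_lt_rev.mpr hij)⟩
  invFun f := ⟨Finset.image f.1 Finset.univ, by
    rw [Finset.card_image_of_injective _ f.2.injective, Finset.card_univ, Fintype.card_fin]⟩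
  left_inv A := by
    apply Subtype.ext
    ext x
    simp only [Finset.mem_image, Finset.mem_univ, true_and]
    constructor
    · rintro ⟨i, rfl⟩; exact Finset.orderEmbOfFin_mem _ _ _
    · intro hx
      have : x ∈ Set.range (A.1.orderEmbOfFin A.2) := by
        rw [Finset.range_orderEmbOfFin]; exact hx
      obtain ⟨j, hj⟩ := this
      exact ⟨j.rev, by rw [Fin.rev_rev, hj]⟩
  right_inv f := by
    apply Subtype.ext
    funext i
    have hmono : StrictMono (fun j : Fin n => f.1 j.rev) := by
      intro i j hij
      exact f.2 (Fin.rev_lt_rev.mpr hij)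
    have hmem : ∀ j : Fin n, f.1 j.rev ∈ Finset.image f.1 Finset.univ := by
      intro j
      exact Finset.mem_image_of_mem _ (Finset.mem_univ _)
    have := Finset.orderEmbOfFin_unique
      (f := fun j : Fin n => f.1 j.rev)
      (s := Finset.image f.1 Finset.univ)
      (by rw [Finset.card_image_of_injective _ f.2.injective, Finset.card_univ,
            Fintype.card_fin]) hmem hmono
    have h2 := congrFun this.symm i.rev
    simpa [Fin.rev_rev] using h2

lemma mzv_eq_tsum_finset (z : ℕ → ℂ) (n : ℕ) :
    mzv z 2 n = ∑' A : {A : Finset ℕ // A.card = n}, ∏ k ∈ A.1, (1 / z k ^ 2) := by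
  rw [mzv, ← Equiv.tsum_eq (finsetEquivAnti n)]
  apply tsum_congr
  intro A
  show ∏ i : Fin n, (1 / z (A.1.orderEmbOfFin A.2 i.rev) ^ 2) = _
  rw [show (fun i : Fin n => 1 / z (A.1.orderEmbOfFin A.2 i.rev) ^ 2)
      = (fun i : Fin n => (fun j : Fin n => 1 / z (A.1.orderEmbOfFin A.2 j) ^ 2) (Fin.revPerm i))
      from rfl]
  rw [Equiv.prod_comp Fin.revPerm (fun j : Fin n => 1 / z (A.1.orderEmbOfFin A.2 j) ^ 2)]
  apply Finset.prod_bij (i := fun (i : Fin n) _ => A.1.orderEmbOfFin A.2 i)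
  · intro i _; exact Finset.orderEmbOfFin_mem _ _ _
  · intro i _ j _ h
    exact (A.1.orderEmbOfFin A.2).injective h
  · intro x hx
    have : x ∈ Set.range (A.1.orderEmbOfFin A.2) := by
      rw [Finset.range_orderEmbOfFin]; exact hx
    obtain ⟨j, hj⟩ := this
    exact ⟨j, Finset.mem_univ _, hj⟩
  · intro i _; rfl

set_option maxHeartbeats 1000000 in
/-- Evaluation of the Bessel multiple zeta values `ζ_{B,ν}({2}^n)`. -/
theorem bessel_mzv_two (ν : ℂ) (hν : ∀ k : ℕ, ν ≠ -((k : ℂ) + 1))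
    (z : ℕ → ℂ) (hz : ∀ k, z k ≠ 0)
    (hsum : Summable (fun k => 1 / (z k) ^ 2))
    (hprod : ∀ t : ℂ, HasProd (fun k => 1 - t ^ 2 / (z k) ^ 2)
      (∑' m : ℕ, (-1 : ℂ) ^ m / ((Nat.factorial m : ℂ) * poch (ν + 1) m) * (t / 2) ^ (2 * m)))
    (n : ℕ) :
    mzv z 2 n = 1 / (2 ^ (2 * n) * (Nat.factorial n : ℂ) * poch (ν + 1) n) := by
  classical
  set a : ℕ → ℂ := fun k => 1 / z k ^ 2 with ha
  have hsa : Summable a := hsum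
  -- the elementary symmetric sums
  set e : ℕ → ℂ := fun m => ∑' A : {A : Finset ℕ // A.card = m}, ∏ k ∈ A.1, a k with he
  -- nonvanishing of pochhammer
  have hpoch : ∀ m : ℕ, poch (ν + 1) m ≠ 0 := by
    intro m
    induction m with
    | zero => simp [poch]
    | succ m ih =>
      rw [poch, ascPochhammer_succ_eval]
      apply mul_ne_zero ih
      intro h
      exact hν m (by linear_combination h)
  -- coefficients
  set c : ℕ → ℂ := fun m => (-1) ^ m * e m with hc
  set b : ℕ → ℂ := fun m => (-1) ^ m / (4 ^ m * ((Nat.factorial m : ℂ) * poch (ν + 1) m))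
    with hb
  have hbne : ∀ m, b m ≠ 0 := by
    intro m
    rw [hb]
    apply div_ne_zero
    · exact pow_ne_zero _ (by norm_num)
    · exact mul_ne_zero (pow_ne_zero _ (by norm_num))
        (mul_ne_zero (Nat.cast_ne_zero.mpr (Nat.factorial_ne_zero m)) (hpoch m))
  -- key pointwise identity
  have key : ∀ u : ℂ, ∑' m, c m * u ^ m = ∑' m, b m * u ^ m := by
    intro u
    obtain ⟨t, ht⟩ := IsAlgClosed.exists_pow_nat_eq u (n := 2) (by norm_num)
    subst ht
    set x : ℕ → ℂ := fun k => (-t ^ 2) * a k with hx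
    have hxs : Summable x := hsa.mul_left _
    have h1 : HasProd (fun k => 1 + x k) (∑' A : Finset ℕ, ∏ k ∈ A, x k) := hasProd_one_add hxs
    have h2 : (fun k => 1 - t ^ 2 / z k ^ 2) = (fun k => 1 + x k) := by
      funext k
      rw [hx, ha]
      ring
    have h3 := (h2 ▸ hprod t).unique h1
    -- regroup LHS by cardinality
    have h4 : ∑' A : Finset ℕ, ∏ k ∈ A, x k = ∑' m, c m * (t ^ 2) ^ m := by
      rw [tsum_finset_card (summable_finsetProd hxs)]
      apply tsum_congr
      intro m
      have : ∀ A : {A : Finset ℕ // A.card = m},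
          ∏ k ∈ A.1, x k = (-t ^ 2) ^ m * ∏ k ∈ A.1, a k := by
        intro A
        rw [hx]
        simp only [Finset.prod_mul_distrib, Finset.prod_const, A.2]
      rw [tsum_congr this, tsum_mul_left, hc, he]
      ring
    -- rewrite RHS termwise
    have h5 : ∑' m : ℕ, (-1 : ℂ) ^ m / ((Nat.factorial m : ℂ) * poch (ν + 1) m)
        * (t / 2) ^ (2 * m) = ∑' m, b m * (t ^ 2) ^ m := by
      apply tsum_congr
      intro m
      rw [hb, pow_mul, div_pow, div_pow, show ((2:ℂ) ^ 2) ^ m = 4 ^ m by norm_num]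
      dsimp only
      generalize (4:ℂ) ^ m = w
      ring
    rw [← h4, ← h3, h5]
  -- summability bounds for the radius of c
  have hcsumm : ∀ r : ℝ≥0, Summable (fun m => ‖c m‖ * (r : ℝ) ^ m) := by
    intro r
    set bb : ℕ → ℝ := fun k => (r : ℝ) * ‖a k‖ with hbb
    have hbbs : Summable bb := (summable_norm_iff.mpr hsa).mul_left _
    have hbb0 : ∀ k, 0 ≤ bb k := fun k => mul_nonneg r.coe_nonneg (norm_nonneg _)
    have hfin : Summable (fun A : Finset ℕ => ∏ k ∈ A, bb k) :=
      summable_finsetProd_real hbbs hbb0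
    have hE : Summable (fun m : ℕ => ∑' A : {A : Finset ℕ // A.card = m}, ∏ k ∈ A.1, bb k) :=
      summable_fiber_card hfin
    apply Summable.of_nonneg_of_le
      (fun m => mul_nonneg (norm_nonneg _) (pow_nonneg r.coe_nonneg _)) _ hE
    intro m
    have hnormsum : Summable (fun A : {A : Finset ℕ // A.card = m} => ‖∏ k ∈ A.1, a k‖) := by
      have := summable_subtype_card (summable_finsetProd_real
        (summable_norm_iff.mpr hsa) (fun k => norm_nonneg _)) m
      simpa [norm_prod] using this
    have h6 : ‖c m‖ ≤ ∑' A : {A : Finset ℕ // A.card = m}, ‖∏ k ∈ A.1, a k‖ := by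
      rw [hc, norm_mul, norm_pow, norm_neg, norm_one, one_pow, one_mul, he]
      exact norm_tsum_le_tsum_norm hnormsum
    calc ‖c m‖ * (r : ℝ) ^ m
        ≤ (∑' A : {A : Finset ℕ // A.card = m}, ‖∏ k ∈ A.1, a k‖) * (r : ℝ) ^ m := by
          apply mul_le_mul_of_nonneg_right h6 (pow_nonneg r.coe_nonneg _)
      _ = ∑' A : {A : Finset ℕ // A.card = m}, ∏ k ∈ A.1, bb k := by
          rw [← tsum_mul_right]
          apply tsum_congr
          intro A
          rw [hbb, Finset.prod_mul_distrib, Finset.prod_const, A.2, norm_prod]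
          ring
    -- done
  -- power series
  set p := FormalMultilinearSeries.ofScalars ℂ c with hp
  set q := FormalMultilinearSeries.ofScalars ℂ b with hq
  have hpr : p.radius = ⊤ := by
    apply p.radius_eq_top_of_summable_norm
    intro r
    simp only [hp, FormalMultilinearSeries.ofScalars_norm]
    exact hcsumm r
  have hqr : q.radius = ⊤ := by
    apply FormalMultilinearSeries.ofScalars_radius_eq_top_of_tendsto
    · exact Eventually.of_forall hbne
    · have hrat : ∀ m : ℕ, ‖b (m + 1)‖ / ‖b m‖ = (4 * ((m : ℝ) + 1) * ‖ν + 1 + (m : ℂ)‖)⁻¹ := by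
        intro m
        have hν' : (ν + 1 + (m : ℂ)) ≠ 0 := fun h => hν m (by linear_combination h)
        have hf0 : ((Nat.factorial m : ℂ)) ≠ 0 := Nat.cast_ne_zero.mpr (Nat.factorial_ne_zero m)
        have hp0 := hpoch m
        have h40 : ((4 : ℂ)) ≠ 0 := by norm_num
        have hm1 : (((m : ℕ) : ℂ) + 1) ≠ 0 := Nat.cast_add_one_ne_zero m
        have hb1 : b (m + 1) = b m * (-1) / (4 * (((m : ℕ) : ℂ) + 1) * (ν + 1 + m)) := by
          have hfact : ((Nat.factorial (m + 1) : ℂ)) = (((m : ℕ) : ℂ) + 1) * (Nat.factorial m : ℂ) := by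
            push_cast [Nat.factorial_succ]
            ring
          have hpoch1 : poch (ν + 1) (m + 1) = poch (ν + 1) m * (ν + 1 + m) := by
            rw [poch, poch, ascPochhammer_succ_eval]
          simp only [hb]
          rw [hpoch1, hfact, pow_succ, pow_succ]
          field_simp
        have hbm : ‖b m‖ ≠ 0 := norm_ne_zero_iff.mpr (hbne m)
        have hD : ‖(4 : ℂ) * (((m : ℕ) : ℂ) + 1) * (ν + 1 + (m : ℂ))‖
            = 4 * ((m : ℝ) + 1) * ‖ν + 1 + (m : ℂ)‖ := by
          rw [norm_mul, norm_mul]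
          congr 2
          · norm_num
          · exact_mod_cast Complex.norm_natCast (m + 1)
        rw [hb1, norm_div, norm_mul, norm_neg, norm_one, mul_one, hD]
        rw [div_right_comm, div_self hbm, one_div]
      have htend : Tendsto (fun m : ℕ => 4 * ((m : ℝ) + 1) * ‖ν + 1 + (m : ℂ)‖) atTop atTop := by
        apply Tendsto.atTop_mul_atTop₀
        · apply tendsto_atTop_mono (f := fun m : ℕ => (m : ℝ))
          · intro m
            have : (0 : ℝ) ≤ (m : ℝ) := Nat.cast_nonneg m
            linarith
          · exact tendsto_natCast_atTop_atTop
        · apply tendsto_atTop_mono (f := fun m : ℕ => (m : ℝ) - ‖ν + 1‖)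
          · intro m
            have h7 := norm_sub_norm_le ((m : ℂ)) (-(ν + 1))
            rw [norm_neg, sub_neg_eq_add] at h7
            calc (m : ℝ) - ‖ν + 1‖ = ‖(m : ℂ)‖ - ‖ν + 1‖ := by simp
              _ ≤ ‖(m : ℂ) + (ν + 1)‖ := h7
              _ = ‖ν + 1 + (m : ℂ)‖ := by rw [add_comm]
          · simpa [sub_eq_add_neg] using
              tendsto_atTop_add_const_right atTop (-‖ν + 1‖) tendsto_natCast_atTop_atTop
      have := htend.inv_tendsto_atTop
      refine Tendsto.congr (fun m => (hrat m).symm) this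
  have hppos : (0 : ENNReal) < p.radius := by rw [hpr]; exact ENNReal.zero_lt_top
  have hqpos : (0 : ENNReal) < q.radius := by rw [hqr]; exact ENNReal.zero_lt_top
  have hps := (p.hasFPowerSeriesOnBall hppos).hasFPowerSeriesAt
  have hqs := (q.hasFPowerSeriesOnBall hqpos).hasFPowerSeriesAt
  have hfun : p.sum = q.sum := by
    funext u
    show FormalMultilinearSeries.ofScalarsSum c u = FormalMultilinearSeries.ofScalarsSum b u
    rw [FormalMultilinearSeries.ofScalars_sum_eq, FormalMultilinearSeries.ofScalars_sum_eq]
    simpa [smul_eq_mul] using key u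
  rw [hfun] at hps
  have hpq : p = q := hps.eq_formalMultilinearSeries hqs
  have hcb : c = b := by
    rw [hp, hq] at hpq
    exact (FormalMultilinearSeries.ofScalars_series_eq_iff ℂ c b).mp hpq
  have hcbn := congrFun hcb n
  -- extract e n
  have hen : e n = 1 / (4 ^ n * ((Nat.factorial n : ℂ) * poch (ν + 1) n)) := by
    simp only [hc, hb] at hcbn
    have h1 : ((-1 : ℂ)) ^ n * ((-1 : ℂ)) ^ n = 1 := by
      rw [← pow_add, ← two_mul, pow_mul]
      norm_num
    calc e n = ((-1 : ℂ)) ^ n * (((-1 : ℂ)) ^ n * e n) := by rw [← mul_assoc, h1, one_mul]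
      _ = ((-1 : ℂ)) ^ n * (((-1 : ℂ)) ^ n
            / (4 ^ n * ((Nat.factorial n : ℂ) * poch (ν + 1) n))) := by rw [hcbn]
      _ = (((-1 : ℂ)) ^ n * ((-1 : ℂ)) ^ n)
            / (4 ^ n * ((Nat.factorial n : ℂ) * poch (ν + 1) n)) := by rw [mul_div_assoc]
      _ = 1 / (4 ^ n * ((Nat.factorial n : ℂ) * poch (ν + 1) n)) := by rw [h1]
  rw [mzv_eq_tsum_finset]
  have hmz : (∑' A : {A : Finset ℕ // A.card = n}, ∏ k ∈ A.1, (1 / z k ^ 2)) = e n := rfl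
  rw [hmz, hen, pow_mul]
  norm_num [mul_assoc]
end

section
/- For all integers k > n ≥ 1, the Bernoulli numbers satisfy, in ℚ: ∑_{j=0}^{n} B_{2n−2j} · C(2k−2j−1, k) · C(2n+1, 2j+1) = ((2n+1)/2) · C(2k−2n, k). -/
open Finset Nat

/-- Binomial coefficient with integer lower index (zero when negative). -/
def ch (a : ℕ) (b : ℤ) : ℚ := if 0 ≤ b then (a.choose b.toNat : ℚ) else 0

lemma ch_pascal (a : ℕ) (b : ℤ) (ha : 1 ≤ a) :
    ch a b - ch (a - 1) b = ch (a - 1) (b - 1) := by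
  rcases lt_trichotomy b 0 with h | h | h
  · simp [ch, not_le.2 h, not_le.2 (by omega : b - 1 < 0)]; intro h'; omega
  · subst h; simp [ch]
  · obtain ⟨t, rfl⟩ : ∃ t : ℕ, b = (t : ℤ) + 1 := ⟨(b-1).toNat, by omega⟩
    obtain ⟨a', rfl⟩ : ∃ a', a = a' + 1 := ⟨a - 1, by omega⟩
    have h1 : ((t:ℤ)+1).toNat = t + 1 := by omega
    simp only [ch, if_pos (by omega : (0:ℤ) ≤ (t:ℤ)+1), if_pos (by omega : (0:ℤ) ≤ (t:ℤ)+1-1),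
      add_tsub_cancel_right, h1, add_sub_cancel_right, Int.toNat_natCast]
    rw [Nat.choose_succ_succ']
    rw [if_pos (by omega : (0:ℤ) ≤ (t:ℤ))]
    push_cast; ring

lemma ch_diff : ∀ j a : ℕ, j ≤ a → ∀ b : ℤ,
    ∑ i ∈ range (j + 1), (-1 : ℚ) ^ i * (j.choose i : ℚ) * ch (a - i) b
      = ch (a - j) (b - j) := by
  intro j
  induction j with
  | zero => intro a _ b; simp
  | succ j ih =>
    intro a ha b
    rw [Finset.sum_range_succ' _ (j+1)]
    have key : ∀ i ∈ range (j + 1),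
        (-1:ℚ)^(i+1) * ((j+1).choose (i+1) : ℚ) * ch (a - (i+1)) b
        = ((-1:ℚ)^(i+1) * (j.choose (i+1) : ℚ) * ch (a - (i+1)) b)
          - ((-1:ℚ)^i * (j.choose i : ℚ) * ch ((a-1) - i) b) := by
      intro i _
      rw [Nat.choose_succ_succ']
      have : a - (i+1) = (a - 1) - i := by omega
      rw [this]
      push_cast; ring
    rw [Finset.sum_congr rfl key, Finset.sum_sub_distrib]
    have e1 : (∑ i ∈ range (j+1), (-1:ℚ)^(i+1) * (j.choose (i+1) : ℚ) * ch (a - (i+1)) b)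
        + (-1:ℚ)^0 * ((j+1).choose 0 : ℚ) * ch (a - 0) b
        = ∑ i ∈ range (j+2), (-1:ℚ)^i * (j.choose i : ℚ) * ch (a - i) b := by
      rw [Finset.sum_range_succ' (fun i => (-1:ℚ)^i * (j.choose i : ℚ) * ch (a - i) b) (j+1)]
      simp
    have e2 : ∑ i ∈ range (j+2), (-1:ℚ)^i * (j.choose i : ℚ) * ch (a - i) b
        = ∑ i ∈ range (j+1), (-1:ℚ)^i * (j.choose i : ℚ) * ch (a - i) b := by
      rw [Finset.sum_range_succ]
      simp [Nat.choose_succ_self]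
    have ihb := ih a (by omega) b
    have ihb' := ih (a-1) (by omega) b
    have hp := ch_pascal (a - j) (b - j) (by omega : 1 ≤ a - j)
    have h1 : a - 1 - j = a - j - 1 := by omega
    have h2 : a - (j+1) = a - j - 1 := by omega
    have h3 : b - (↑(j+1) : ℤ) = b - j - 1 := by push_cast; ring
    rw [h3, h2, ← hp, ← ihb]
    rw [h1] at ihb'
    rw [← ihb']
    rw [← e2, ← e1]
    ring

lemma star (k j : ℕ) (h : j ≤ 2 * k) :
    ∑ i ∈ range (j + 1), (-1 : ℚ) ^ i * (j.choose i : ℚ) * ((2 * k - i).choose k : ℚ)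
      = ((2 * k - j).choose k : ℚ) := by
  have key := ch_diff j (2 * k) h (k : ℤ)
  have e : ∀ i : ℕ, ch (2 * k - i) (k : ℤ) = ((2 * k - i).choose k : ℚ) := by
    intro i; simp [ch]
  simp only [e] at key
  rw [key]
  by_cases hj : j ≤ k
  · rw [ch, if_pos (by omega : (0:ℤ) ≤ (k:ℤ) - j)]
    have : ((k:ℤ) - j).toNat = k - j := by omega
    rw [this]
    have h4 : 2 * k - j - k = k - j := by omega
    rw [← h4, Nat.choose_symm (by omega)]
  · rw [ch, if_neg (by omega : ¬ (0:ℤ) ≤ (k:ℤ) - j)]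
    rw [Nat.choose_eq_zero_of_lt (by omega : 2 * k - j < k)]
    simp

lemma sum_range_two_mul (N : ℕ) (f : ℕ → ℚ) :
    ∑ i ∈ range (2 * N), f i
      = ∑ j ∈ range N, f (2 * j) + ∑ j ∈ range N, f (2 * j + 1) := by
  induction N with
  | zero => simp
  | succ N ih =>
    have : 2 * (N + 1) = (2 * N + 1) + 1 := by ring
    rw [this, Finset.sum_range_succ, Finset.sum_range_succ, ih,
      Finset.sum_range_succ, Finset.sum_range_succ]
    ring

lemma bern_inner (r : ℕ) :
    ∑ s ∈ range (r + 1), (r.choose s : ℚ) * bernoulli (r - s)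
      = (if r = 1 then 1 else 0) + bernoulli r := by
  have := Finset.sum_range_reflect (fun s => (r.choose s : ℚ) * bernoulli (r - s)) (r + 1)
  rw [← this]
  have e : ∀ s ∈ range (r + 1),
      (r.choose (r + 1 - 1 - s) : ℚ) * bernoulli (r - (r + 1 - 1 - s))
      = (r.choose s : ℚ) * bernoulli s := by
    intro s hs
    have hs' : s ≤ r := by simpa [Nat.lt_succ_iff] using hs
    have h1 : r + 1 - 1 - s = r - s := by omega
    have h2 : r - (r - s) = s := by omega
    rw [h1, h2, Nat.choose_symm hs']
  rw [Finset.sum_congr rfl e, Finset.sum_range_succ, sum_bernoulli]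
  simp

lemma inner_eq (n j : ℕ) (hj : j ≤ 2 * n + 1) :
    ∑ i ∈ range (2 * n + 2),
        (if j ≤ i then
          ((2 * n + 1).choose i : ℚ) * bernoulli (2 * n + 1 - i) * (i.choose j : ℚ) else 0)
      = ((2 * n + 1).choose j : ℚ) *
          ((if 2 * n + 1 - j = 1 then (1 : ℚ) else 0) + bernoulli (2 * n + 1 - j)) := by
  rw [← Finset.sum_filter]
  have hf : filter (fun i => j ≤ i) (range (2 * n + 2)) = Ico j (2 * n + 2) := by
    ext i
    simp only [Finset.mem_filter, Finset.mem_range, Finset.mem_Ico]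
    omega
  rw [hf, Finset.sum_Ico_eq_sum_range]
  have hlen : 2 * n + 2 - j = (2 * n + 1 - j) + 1 := by omega
  rw [hlen]
  have e : ∀ s ∈ range ((2 * n + 1 - j) + 1),
      ((2 * n + 1).choose (j + s) : ℚ) * bernoulli (2 * n + 1 - (j + s)) * ((j + s).choose j : ℚ)
        = ((2 * n + 1).choose j : ℚ) *
            (((2 * n + 1 - j).choose s : ℚ) * bernoulli ((2 * n + 1 - j) - s)) := by
    intro s hs
    have hs' : s ≤ 2 * n + 1 - j := by
      have := Finset.mem_range.1 hs; omega
    have hmul := Nat.choose_mul (n := 2 * n + 1) (show j ≤ j + s by omega)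
    have h1 : j + s - j = s := by omega
    rw [h1] at hmul
    have hq : ((2 * n + 1).choose (j + s) : ℚ) * ((j + s).choose j : ℚ)
        = ((2 * n + 1).choose j : ℚ) * ((2 * n + 1 - j).choose s : ℚ) := by
      exact_mod_cast congrArg (Nat.cast : ℕ → ℚ) hmul
    have h2 : 2 * n + 1 - (j + s) = (2 * n + 1 - j) - s := by omega
    rw [h2, show ((2 * n + 1).choose (j + s) : ℚ) * bernoulli ((2 * n + 1 - j) - s) *
        ((j + s).choose j : ℚ) = ((2 * n + 1).choose (j + s) : ℚ) * ((j + s).choose j : ℚ) *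
        bernoulli ((2 * n + 1 - j) - s) from by ring, hq]
    ring
  rw [Finset.sum_congr rfl e, ← Finset.mul_sum, bern_inner (2 * n + 1 - j)]

lemma T_eq (n k : ℕ) (hk : n < k) :
    ∑ i ∈ range (2 * n + 2),
        ((2 * n + 1).choose i : ℚ) * bernoulli (2 * n + 1 - i) * ((2 * k - i).choose k : ℚ)
      = ∑ j ∈ range (2 * n + 2),
          (-1 : ℚ) ^ j * ((2 * k - j).choose k : ℚ) * ((2 * n + 1).choose j : ℚ) *
            ((if 2 * n + 1 - j = 1 then (1 : ℚ) else 0) + bernoulli (2 * n + 1 - j)) := by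
  have step1 : ∀ i ∈ range (2 * n + 2),
      ((2 * n + 1).choose i : ℚ) * bernoulli (2 * n + 1 - i) * ((2 * k - i).choose k : ℚ)
        = ∑ j ∈ range (2 * n + 2),
            (if j ≤ i then (-1 : ℚ) ^ j * ((2 * k - j).choose k : ℚ) *
              (((2 * n + 1).choose i : ℚ) * bernoulli (2 * n + 1 - i) * (i.choose j : ℚ))
            else 0) := by
    intro i hi
    have hi' : i ≤ 2 * n + 1 := by have := Finset.mem_range.1 hi; omega
    have hstar := star k i (by omega)
    rw [← hstar, Finset.mul_sum]
    rw [show ∑ j ∈ range (i + 1),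
        ((2 * n + 1).choose i : ℚ) * bernoulli (2 * n + 1 - i) *
          ((-1 : ℚ) ^ j * (i.choose j : ℚ) * ((2 * k - j).choose k : ℚ))
        = ∑ j ∈ range (i + 1),
          (if j ≤ i then (-1 : ℚ) ^ j * ((2 * k - j).choose k : ℚ) *
            (((2 * n + 1).choose i : ℚ) * bernoulli (2 * n + 1 - i) * (i.choose j : ℚ))
          else 0) from Finset.sum_congr rfl fun j hj => by
            rw [if_pos (by have := Finset.mem_range.1 hj; omega : j ≤ i)]; ring]
    apply Finset.sum_subset
    · exact Finset.range_subset_range.2 (by omega)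
    · intro j _ hj
      rw [if_neg (by simp only [Finset.mem_range] at hj; omega : ¬ j ≤ i)]
  rw [Finset.sum_congr rfl step1, Finset.sum_comm]
  refine Finset.sum_congr rfl fun j hj => ?_
  have hj' : j ≤ 2 * n + 1 := by have := Finset.mem_range.1 hj; omega
  have pull : ∑ i ∈ range (2 * n + 2),
      (if j ≤ i then (-1 : ℚ) ^ j * ((2 * k - j).choose k : ℚ) *
        (((2 * n + 1).choose i : ℚ) * bernoulli (2 * n + 1 - i) * (i.choose j : ℚ)) else 0)
      = (-1 : ℚ) ^ j * ((2 * k - j).choose k : ℚ) *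
        ∑ i ∈ range (2 * n + 2),
          (if j ≤ i then ((2 * n + 1).choose i : ℚ) * bernoulli (2 * n + 1 - i) *
            (i.choose j : ℚ) else 0) := by
    rw [Finset.mul_sum]
    refine Finset.sum_congr rfl fun i _ => ?_
    by_cases h : j ≤ i <;> simp [h]
  rw [pull, inner_eq n j hj']
  ring

lemma bern_odd_zero (d : ℕ) (hd : Odd d) (hd1 : 1 < d) : bernoulli d = 0 := by
  rw [bernoulli_eq_bernoulli'_of_ne_one (by omega), bernoulli'_eq_zero_of_odd hd hd1]

lemma T_zero (n k : ℕ) (hn : 1 ≤ n) (hk : n < k) :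
    ∑ i ∈ range (2 * n + 2),
        ((2 * n + 1).choose i : ℚ) * bernoulli (2 * n + 1 - i) * ((2 * k - i).choose k : ℚ)
      = 0 := by
  have hTeq := T_eq n k hk
  -- split RHS into E + S
  have hsplit : ∑ j ∈ range (2 * n + 2),
      (-1 : ℚ) ^ j * ((2 * k - j).choose k : ℚ) * ((2 * n + 1).choose j : ℚ) *
        ((if 2 * n + 1 - j = 1 then (1 : ℚ) else 0) + bernoulli (2 * n + 1 - j))
      = (∑ j ∈ range (2 * n + 2),
          (-1 : ℚ) ^ j * ((2 * k - j).choose k : ℚ) * ((2 * n + 1).choose j : ℚ) *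
            (if 2 * n + 1 - j = 1 then (1 : ℚ) else 0))
        + ∑ j ∈ range (2 * n + 2),
            (-1 : ℚ) ^ j * ((2 * k - j).choose k : ℚ) * ((2 * n + 1).choose j : ℚ) *
              bernoulli (2 * n + 1 - j) := by
    rw [← Finset.sum_add_distrib]
    exact Finset.sum_congr rfl fun j _ => by ring
  -- E
  have hE : ∑ j ∈ range (2 * n + 2),
      (-1 : ℚ) ^ j * ((2 * k - j).choose k : ℚ) * ((2 * n + 1).choose j : ℚ) *
        (if 2 * n + 1 - j = 1 then (1 : ℚ) else 0)
      = (2 * n + 1 : ℚ) * ((2 * k - 2 * n).choose k : ℚ) := by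
    have e : ∀ j ∈ range (2 * n + 2),
        (-1 : ℚ) ^ j * ((2 * k - j).choose k : ℚ) * ((2 * n + 1).choose j : ℚ) *
          (if 2 * n + 1 - j = 1 then (1 : ℚ) else 0)
        = if j = 2 * n then
            (-1 : ℚ) ^ j * ((2 * k - j).choose k : ℚ) * ((2 * n + 1).choose j : ℚ) else 0 := by
      intro j hj
      have hj' := Finset.mem_range.1 hj
      by_cases h : j = 2 * n
      · rw [if_pos h, if_pos (by omega), mul_one]
      · rw [if_neg h, if_neg (by omega), mul_zero]
    rw [Finset.sum_congr rfl e, Finset.sum_ite_eq' (range (2 * n + 2)) (2 * n)]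
    rw [if_pos (Finset.mem_range.2 (by omega))]
    have h1 : (-1 : ℚ) ^ (2 * n) = 1 := Even.neg_one_pow ⟨n, by ring⟩
    have h2 : (2 * n + 1).choose (2 * n) = 2 * n + 1 := Nat.choose_succ_self_right (2 * n)
    rw [h1, h2]
    push_cast
    ring
  -- S + T
  have hST : (∑ j ∈ range (2 * n + 2),
        (-1 : ℚ) ^ j * ((2 * k - j).choose k : ℚ) * ((2 * n + 1).choose j : ℚ) *
          bernoulli (2 * n + 1 - j))
      + ∑ i ∈ range (2 * n + 2),
          ((2 * n + 1).choose i : ℚ) * bernoulli (2 * n + 1 - i) * ((2 * k - i).choose k : ℚ)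
      = -(2 * n + 1 : ℚ) * ((2 * k - 2 * n).choose k : ℚ) := by
    rw [← Finset.sum_add_distrib]
    have e : ∀ j ∈ range (2 * n + 2),
        (-1 : ℚ) ^ j * ((2 * k - j).choose k : ℚ) * ((2 * n + 1).choose j : ℚ) *
            bernoulli (2 * n + 1 - j)
          + ((2 * n + 1).choose j : ℚ) * bernoulli (2 * n + 1 - j) * ((2 * k - j).choose k : ℚ)
        = if j = 2 * n then -(2 * n + 1 : ℚ) * ((2 * k - 2 * n).choose k : ℚ) else 0 := by
      intro j hj
      have hj' := Finset.mem_range.1 hj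
      rcases Nat.even_or_odd j with he | ho
      · have h1 : (-1 : ℚ) ^ j = 1 := he.neg_one_pow
        by_cases h : j = 2 * n
        · subst h
          rw [if_pos rfl, h1, show 2 * n + 1 - 2 * n = 1 from by omega, bernoulli_one,
            Nat.choose_succ_self_right (2 * n)]
          push_cast
          ring
        · have hje := Nat.even_iff.1 he
          rw [if_neg h, h1,
            bern_odd_zero (2 * n + 1 - j) (Nat.odd_iff.2 (by omega)) (by omega)]
          ring
      · have h1 : (-1 : ℚ) ^ j = -1 := ho.neg_one_pow
        rw [if_neg (by have := Nat.odd_iff.1 ho; omega), h1]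
        ring
    rw [Finset.sum_congr rfl e, Finset.sum_ite_eq' (range (2 * n + 2)) (2 * n)]
    rw [if_pos (Finset.mem_range.2 (by omega))]
  rw [hsplit, hE] at hTeq
  linarith [hTeq, hST]

/-- The Gessel–Viennot identity for Bernoulli numbers, valid in the range `k > n`. -/
theorem gessel_viennot (n k : ℕ) (hn : 1 ≤ n) (hk : n < k) :
    ∑ j ∈ Finset.range (n + 1),
        bernoulli (2 * n - 2 * j) * (Nat.choose (2 * k - 2 * j - 1) k : ℚ) *
          (Nat.choose (2 * n + 1) (2 * j + 1) : ℚ) =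
      ((2 * n + 1 : ℚ) / 2) * (Nat.choose (2 * k - 2 * n) k : ℚ) := by
  have hT := T_zero n k hn hk
  have hsplit := sum_range_two_mul (n + 1)
    (fun i => ((2 * n + 1).choose i : ℚ) * bernoulli (2 * n + 1 - i) * ((2 * k - i).choose k : ℚ))
  rw [show 2 * (n + 1) = 2 * n + 2 from by ring] at hsplit
  rw [hsplit] at hT
  -- even part
  have hEven : ∑ j ∈ range (n + 1),
      ((2 * n + 1).choose (2 * j) : ℚ) * bernoulli (2 * n + 1 - 2 * j) *
        ((2 * k - 2 * j).choose k : ℚ)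
      = -((2 * n + 1 : ℚ) / 2) * ((2 * k - 2 * n).choose k : ℚ) := by
    rw [Finset.sum_eq_single n]
    · rw [show 2 * n + 1 - 2 * n = 1 from by omega, bernoulli_one,
        Nat.choose_succ_self_right (2 * n)]
      push_cast
      ring
    · intro j hj hjn
      have hj' := Finset.mem_range.1 hj
      rw [bern_odd_zero (2 * n + 1 - 2 * j) (Nat.odd_iff.2 (by omega)) (by omega)]
      ring
    · intro h
      exact absurd (Finset.mem_range.2 (by omega)) h
  -- odd part equals goal LHS
  have hOdd : ∑ j ∈ range (n + 1),
      ((2 * n + 1).choose (2 * j + 1) : ℚ) * bernoulli (2 * n + 1 - (2 * j + 1)) *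
        ((2 * k - (2 * j + 1)).choose k : ℚ)
      = ∑ j ∈ range (n + 1),
          bernoulli (2 * n - 2 * j) * ((2 * k - 2 * j - 1).choose k : ℚ) *
            ((2 * n + 1).choose (2 * j + 1) : ℚ) := by
    refine Finset.sum_congr rfl fun j hj => ?_
    rw [show 2 * n + 1 - (2 * j + 1) = 2 * n - 2 * j from by omega,
      show 2 * k - (2 * j + 1) = 2 * k - 2 * j - 1 from by omega]
    ring
  rw [hEven, hOdd] at hT
  linarith [hT]
end

section
/- For every integer n ≥ 0 the following two identities between real numbers hold: (i) Γ(5/6) / (12^n · (3n)! · Γ(n + 5/6)) = (2/3)^{4n} · 1/(2^{4n} · n! · (2/3)_{2n} · (2/3)_n); (ii) Γ(7/6) / (12^n · (3n+1)! · Γ(n + 7/6)) = (2/3)^{4n} · 1/(2^{4n} · n! · (4/3)_{2n} · (4/3)_n). -/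
/-- The Pochhammer symbol `(x)_n = x(x+1)⋯(x+n-1)` over `ℝ`. -/
noncomputable def pochR (x : ℝ) (n : ℕ) : ℝ := (ascPochhammer ℝ n).eval x

lemma pochR_pos {x : ℝ} (hx : 0 < x) (n : ℕ) : 0 < pochR x n :=
  ascPochhammer_pos n x hx

lemma pochR_zero (x : ℝ) : pochR x 0 = 1 := by
  simp [pochR, ascPochhammer_zero]

lemma pochR_succ (x : ℝ) (n : ℕ) : pochR x (n + 1) = pochR x n * (x + n) := by
  simp [pochR, ascPochhammer_succ_eval]

lemma key1 (n : ℕ) :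
    Real.Gamma (5 / 6) * (2 ^ (4 * n) * (Nat.factorial n : ℝ) * pochR (2 / 3) (2 * n) * pochR (2 / 3) n) =
      (2 / 3 : ℝ) ^ (4 * n) * (12 ^ n * (Nat.factorial (3 * n) : ℝ) * Real.Gamma ((n : ℝ) + 5 / 6)) := by
  induction n with
  | zero => simp [pochR_zero]
  | succ n ih =>
    have h1 : 3 * (n + 1) = 3 * n + 1 + 1 + 1 := by ring
    have h2 : 2 * (n + 1) = 2 * n + 1 + 1 := by ring
    have h3 : 4 * (n + 1) = 4 * n + 4 := by ring
    have hg : Real.Gamma ((↑(n + 1) : ℝ) + 5 / 6) = ((n : ℝ) + 5 / 6) * Real.Gamma ((n : ℝ) + 5 / 6) := by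
      have : ((↑(n + 1) : ℝ) + 5 / 6) = ((n : ℝ) + 5 / 6) + 1 := by push_cast; ring
      rw [this, Real.Gamma_add_one]
      positivity
    rw [h1, h2, h3, hg, Nat.factorial_succ, Nat.factorial_succ, Nat.factorial_succ,
      Nat.factorial_succ, pochR_succ, pochR_succ, pochR_succ]
    push_cast
    ring_nf
    ring_nf at ih
    linear_combination (16 * ((n : ℝ) + 1) * (2/3 + 2*n) * (5/3 + 2*n) * (2/3 + n)) * ih

lemma key2 (n : ℕ) :
    Real.Gamma (7 / 6) * (2 ^ (4 * n) * (Nat.factorial n : ℝ) * pochR (4 / 3) (2 * n) * pochR (4 / 3) n) =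
      (2 / 3 : ℝ) ^ (4 * n) * (12 ^ n * (Nat.factorial (3 * n + 1) : ℝ) * Real.Gamma ((n : ℝ) + 7 / 6)) := by
  induction n with
  | zero => simp [pochR_zero]
  | succ n ih =>
    have h1 : 3 * (n + 1) + 1 = 3 * n + 1 + 1 + 1 + 1 := by ring
    have h2 : 2 * (n + 1) = 2 * n + 1 + 1 := by ring
    have h3 : 4 * (n + 1) = 4 * n + 4 := by ring
    have hg : Real.Gamma ((↑(n + 1) : ℝ) + 7 / 6) = ((n : ℝ) + 7 / 6) * Real.Gamma ((n : ℝ) + 7 / 6) := by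
      have : ((↑(n + 1) : ℝ) + 7 / 6) = ((n : ℝ) + 7 / 6) + 1 := by push_cast; ring
      rw [this, Real.Gamma_add_one]
      positivity
    rw [h1, h2, h3, hg, Nat.factorial_succ, Nat.factorial_succ, Nat.factorial_succ,
      Nat.factorial_succ, pochR_succ, pochR_succ, pochR_succ]
    push_cast
    ring_nf
    ring_nf at ih
    linear_combination (16 * ((n : ℝ) + 1) * (4/3 + 2*n) * (7/3 + 2*n) * (4/3 + n)) * ih

/-- The relation between Airy multiple zeta values and Bessel multiple zeta values:
(i)  `ζ_Ai({2}^{3n}) = (2/3)^{4n} · ζ_{B,−1/3}({4}^n)` and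
(ii) `ζ_Ai({2}^{3n+1})/ζ_Ai({2}) = (2/3)^{4n} · ζ_{B,1/3}({4}^n)`,
written in closed form. -/
theorem airy_bessel_relation (n : ℕ) :
    (Real.Gamma (5 / 6) /
        (12 ^ n * (Nat.factorial (3 * n) : ℝ) * Real.Gamma ((n : ℝ) + 5 / 6)) =
      (2 / 3 : ℝ) ^ (4 * n) *
        (1 / (2 ^ (4 * n) * (Nat.factorial n : ℝ) * pochR (2 / 3) (2 * n) * pochR (2 / 3) n))) ∧
    (Real.Gamma (7 / 6) /
        (12 ^ n * (Nat.factorial (3 * n + 1) : ℝ) * Real.Gamma ((n : ℝ) + 7 / 6)) =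
      (2 / 3 : ℝ) ^ (4 * n) *
        (1 / (2 ^ (4 * n) * (Nat.factorial n : ℝ) * pochR (4 / 3) (2 * n) * pochR (4 / 3) n))) := by
  have hf : (0 : ℝ) < Nat.factorial n := by positivity
  constructor
  · have hb : (0:ℝ) < 12 ^ n * (Nat.factorial (3 * n) : ℝ) * Real.Gamma ((n : ℝ) + 5 / 6) := by
      have := Real.Gamma_pos_of_pos (show (0:ℝ) < (n : ℝ) + 5 / 6 by positivity)
      positivity
    have hd : (0:ℝ) < 2 ^ (4 * n) * (Nat.factorial n : ℝ) * pochR (2 / 3) (2 * n) * pochR (2 / 3) n := by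
      have h1 := pochR_pos (show (0:ℝ) < 2/3 by norm_num) (2 * n)
      have h2 := pochR_pos (show (0:ℝ) < 2/3 by norm_num) n
      positivity
    rw [mul_one_div, div_eq_div_iff hb.ne' hd.ne']
    linear_combination key1 n
  · have hb : (0:ℝ) < 12 ^ n * (Nat.factorial (3 * n + 1) : ℝ) * Real.Gamma ((n : ℝ) + 7 / 6) := by
      have := Real.Gamma_pos_of_pos (show (0:ℝ) < (n : ℝ) + 7 / 6 by positivity)
      positivity
    have hd : (0:ℝ) < 2 ^ (4 * n) * (Nat.factorial n : ℝ) * pochR (4 / 3) (2 * n) * pochR (4 / 3) n := by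
      have h1 := pochR_pos (show (0:ℝ) < 4/3 by norm_num) (2 * n)
      have h2 := pochR_pos (show (0:ℝ) < 4/3 by norm_num) n
      positivity
    rw [mul_one_div, div_eq_div_iff hb.ne' hd.ne']
    linear_combination key2 n
end
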